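/- arXiv:1712.00042 — 3 statements merged into one kernel-verified Lean document; each statement's English description precedes it below -/
import Mathlib

section
/- Let B be an n×n diagonal matrix with diagonal entries Σ_1,…,Σ_n satisfying |Σ_i| ≥ ε^{-1} σ √n for all i (where ε ∈ (0,1) and σ > 0), and let X be an n×n matrix of i.i.d. centered complex Gaussians of variance σ². Then Var(det(B+X)) ≤ (ε²/(1−ε²)) · |det B|². -/
open scoped ENNReal NNReal
open MeasureTheory ProbabilityTheory Matrix

/-- The centered complex Gaussian measure of (total) variance `v`: real and imaginary
parts are independent real Gaussians of variance `v/2` each. -/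
noncomputable def complexGaussian (v : ℝ) : Measure ℂ :=
  ((gaussianReal 0 (v / 2).toNNReal).prod (gaussianReal 0 (v / 2).toNNReal)).map
    (fun p => (p.1 : ℂ) + (p.2 : ℂ) * Complex.I)




lemma integral_sq_exp {b : ℝ} (hb : 0 < b) :
    ∫ x : ℝ, x ^ 2 * Real.exp (-b * x ^ 2) = (2 * b)⁻¹ * Real.sqrt (Real.pi / b) := by
  have hint2 : Integrable (fun x : ℝ => x ^ 2 * Real.exp (-b * x ^ 2)) := by
    have h := integrable_rpow_mul_exp_neg_mul_sq hb (s := 2) (by norm_num)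
    have heq : ∀ x : ℝ, x ^ (2 : ℝ) = x ^ (2 : ℕ) := fun x => by
      rw [show (2 : ℝ) = ((2 : ℕ) : ℝ) by norm_num, Real.rpow_natCast]
    simpa [heq] using h
  have hderiv : ∀ x : ℝ, HasDerivAt (fun y : ℝ => y * Real.exp (-b * y ^ 2))
      (Real.exp (-b * x ^ 2) - 2 * b * (x ^ 2 * Real.exp (-b * x ^ 2))) x := by
    intro x
    have h1 : HasDerivAt (fun y : ℝ => -b * y ^ 2) (-b * (2 * x)) x := by
      simpa using (hasDerivAt_pow 2 x).const_mul (-b)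
    have h2 : HasDerivAt (fun y : ℝ => Real.exp (-b * y ^ 2))
        (Real.exp (-b * x ^ 2) * (-b * (2 * x))) x := (Real.hasDerivAt_exp _).comp x h1
    have h3 := (hasDerivAt_id x).mul h2
    refine h3.congr_deriv ?_
    simp only [id]
    ring
  have hintf' : Integrable (fun x : ℝ =>
      Real.exp (-b * x ^ 2) - 2 * b * (x ^ 2 * Real.exp (-b * x ^ 2))) :=
    (integrable_exp_neg_mul_sq hb).sub (hint2.const_mul _)
  have h0 := integral_eq_zero_of_hasDerivAt_of_integrable hderiv hintf'
    (integrable_mul_exp_neg_mul_sq hb)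
  rw [integral_sub (integrable_exp_neg_mul_sq hb) (hint2.const_mul _),
    integral_const_mul, integral_gaussian, sub_eq_zero] at h0
  field_simp at h0 ⊢
  linarith

lemma gaussianReal_integral_eq (w : NNReal) (hw : w ≠ 0) (f : ℝ → ℝ) :
    ∫ x, f x ∂(gaussianReal 0 w) = ∫ x, gaussianPDFReal 0 w x * f x := by
  rw [gaussianReal_of_var_ne_zero 0 hw]
  have hm : Measurable (fun x => Real.toNNReal (gaussianPDFReal 0 w x)) :=
    (measurable_gaussianPDFReal 0 w).real_toNNReal
  have h1 : gaussianPDF 0 w = fun x => ((Real.toNNReal (gaussianPDFReal 0 w x) : ℝ≥0) : ℝ≥0∞) := by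
    funext x; rfl
  rw [h1, integral_withDensity_eq_integral_smul hm]
  congr 1; funext x
  rw [NNReal.smul_def, Real.coe_toNNReal _ (gaussianPDFReal_nonneg 0 w x), smul_eq_mul]

lemma gaussianReal_integrable_iff (w : NNReal) (hw : w ≠ 0) (f : ℝ → ℝ) :
    Integrable f (gaussianReal 0 w) ↔ Integrable (fun x => gaussianPDFReal 0 w x * f x) := by
  rw [gaussianReal_of_var_ne_zero 0 hw]
  have hm : Measurable (fun x => Real.toNNReal (gaussianPDFReal 0 w x)) :=
    (measurable_gaussianPDFReal 0 w).real_toNNReal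
  have h1 : gaussianPDF 0 w = fun x => ((Real.toNNReal (gaussianPDFReal 0 w x) : ℝ≥0) : ℝ≥0∞) := by
    funext x; rfl
  rw [h1, integrable_withDensity_iff_integrable_smul hm]
  apply integrable_congr; filter_upwards with x
  rw [NNReal.smul_def, Real.coe_toNNReal _ (gaussianPDFReal_nonneg 0 w x), smul_eq_mul]

lemma gaussianPDFReal_zero_eq (w : NNReal) (x : ℝ) :
    gaussianPDFReal 0 w x
      = (Real.sqrt (2 * Real.pi * w))⁻¹ * Real.exp (-(2 * (w : ℝ))⁻¹ * x ^ 2) := by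
  have h : -(x - 0) ^ 2 / (2 * (w : ℝ)) = -(2 * (w : ℝ))⁻¹ * x ^ 2 := by
    rw [sub_zero]; ring
  rw [gaussianPDFReal, h]

lemma gaussianReal_integrable_id (w : NNReal) (hw : w ≠ 0) :
    Integrable (fun x => x) (gaussianReal 0 w) := by
  have hwpos : 0 < (w : ℝ) := by
    rcases Nat.eq_zero_or_pos 0 with _ | _ <;> exact lt_of_le_of_ne (w.coe_nonneg) (by simpa [eq_comm] using (NNReal.coe_ne_zero.mpr hw).symm)
  have hb : 0 < (2 * (w : ℝ))⁻¹ := by positivity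
  rw [gaussianReal_integrable_iff w hw]
  have : (fun x => gaussianPDFReal 0 w x * x)
      = fun x => (Real.sqrt (2 * Real.pi * w))⁻¹ * (x * Real.exp (-(2 * (w : ℝ))⁻¹ * x ^ 2)) := by
    funext x; rw [gaussianPDFReal_zero_eq]; ring
  rw [this]
  exact (integrable_mul_exp_neg_mul_sq hb).const_mul _

lemma gaussianReal_integral_id (w : NNReal) (hw : w ≠ 0) :
    ∫ x, x ∂(gaussianReal 0 w) = 0 := by
  rw [gaussianReal_integral_eq w hw]
  have hodd : ∀ x : ℝ, gaussianPDFReal 0 w (-x) * (-x) = -(gaussianPDFReal 0 w x * x) := by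
    intro x
    rw [gaussianPDFReal_zero_eq, gaussianPDFReal_zero_eq]
    ring_nf
  have h := integral_neg_eq_self (fun x => gaussianPDFReal 0 w x * x) (volume : Measure ℝ)
  simp only [hodd, integral_neg] at h
  linarith

lemma gaussianReal_integrable_sq (w : NNReal) (hw : w ≠ 0) :
    Integrable (fun x => x ^ 2) (gaussianReal 0 w) := by
  have hwpos : 0 < (w : ℝ) := lt_of_le_of_ne w.coe_nonneg (by simpa [eq_comm] using (NNReal.coe_ne_zero.mpr hw).symm)
  have hb : 0 < (2 * (w : ℝ))⁻¹ := by positivity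
  rw [gaussianReal_integrable_iff w hw]
  have hint2 : Integrable (fun x : ℝ => x ^ 2 * Real.exp (-(2 * (w : ℝ))⁻¹ * x ^ 2)) := by
    have h := integrable_rpow_mul_exp_neg_mul_sq hb (s := 2) (by norm_num)
    have heq : ∀ x : ℝ, x ^ (2 : ℝ) = x ^ (2 : ℕ) := fun x => by
      rw [show (2 : ℝ) = ((2 : ℕ) : ℝ) by norm_num, Real.rpow_natCast]
    simpa [heq] using h
  have : (fun x => gaussianPDFReal 0 w x * x ^ 2)
      = fun x => (Real.sqrt (2 * Real.pi * w))⁻¹ * (x ^ 2 * Real.exp (-(2 * (w : ℝ))⁻¹ * x ^ 2)) := by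
    funext x; rw [gaussianPDFReal_zero_eq]; ring
  rw [this]
  exact hint2.const_mul _

lemma gaussianReal_integral_sq (w : NNReal) (hw : w ≠ 0) :
    ∫ x, x ^ 2 ∂(gaussianReal 0 w) = w := by
  have hwpos : 0 < (w : ℝ) := lt_of_le_of_ne w.coe_nonneg (by simpa [eq_comm] using (NNReal.coe_ne_zero.mpr hw).symm)
  have hb : 0 < (2 * (w : ℝ))⁻¹ := by positivity
  rw [gaussianReal_integral_eq w hw]
  have : (fun x => gaussianPDFReal 0 w x * x ^ 2)
      = fun x => (Real.sqrt (2 * Real.pi * w))⁻¹ * (x ^ 2 * Real.exp (-(2 * (w : ℝ))⁻¹ * x ^ 2)) := by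
    funext x; rw [gaussianPDFReal_zero_eq]; ring
  rw [this, integral_const_mul, integral_sq_exp hb]
  have h1 : (2 * (2 * (w : ℝ))⁻¹)⁻¹ = (w : ℝ) := by field_simp
  have h2 : Real.pi / (2 * (w : ℝ))⁻¹ = 2 * Real.pi * w := by field_simp
  rw [h1, h2]
  have h3 : 0 < Real.sqrt (2 * Real.pi * w) := Real.sqrt_pos.mpr (by positivity)
  field_simp
section CG
variable {v : ℝ} (hv : 0 < v)

lemma cg_phi_meas : Measurable (fun p : ℝ × ℝ => (p.1 : ℂ) + (p.2 : ℂ) * Complex.I) :=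
  (Complex.measurable_ofReal.comp measurable_fst).add
    ((Complex.measurable_ofReal.comp measurable_snd).mul_const _)

instance (v : ℝ) : IsProbabilityMeasure (complexGaussian v) :=
  Measure.isProbabilityMeasure_map cg_phi_meas.aemeasurable

lemma cg_integral (f : ℂ → ℂ) (hf : AEStronglyMeasurable f (complexGaussian v)) :
    ∫ z, f z ∂(complexGaussian v)
      = ∫ p, f ((p.1 : ℂ) + (p.2 : ℂ) * Complex.I)
          ∂((gaussianReal 0 (v / 2).toNNReal).prod (gaussianReal 0 (v / 2).toNNReal)) := by
  rw [complexGaussian] at hf ⊢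
  exact integral_map cg_phi_meas.aemeasurable hf

lemma cg_integrable_iff (f : ℂ → ℂ) (hf : AEStronglyMeasurable f (complexGaussian v)) :
    Integrable f (complexGaussian v)
      ↔ Integrable (fun p : ℝ × ℝ => f ((p.1 : ℂ) + (p.2 : ℂ) * Complex.I))
          ((gaussianReal 0 (v / 2).toNNReal).prod (gaussianReal 0 (v / 2).toNNReal)) := by
  rw [complexGaussian] at hf ⊢
  exact integrable_map_measure hf cg_phi_meas.aemeasurable

include hv

private lemma cg_w_ne : (v / 2).toNNReal ≠ 0 := by
  simp only [ne_eq, Real.toNNReal_eq_zero, not_le]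
  linarith

private lemma cg_w_coe : (((v / 2).toNNReal : ℝ)) = v / 2 :=
  Real.coe_toNNReal _ (by linarith)

private lemma cg_coe_int : Integrable (fun x : ℝ => (x : ℂ)) (gaussianReal 0 (v / 2).toNNReal) := by
  have := (gaussianReal_integrable_id _ (cg_w_ne hv)).ofReal (𝕜 := ℂ)
  simpa using this

private lemma cg_coe_int0 : ∫ x : ℝ, (x : ℂ) ∂(gaussianReal 0 (v / 2).toNNReal) = 0 := by
  have := integral_ofReal (𝕜 := ℂ) (μ := gaussianReal 0 (v / 2).toNNReal) (f := fun x : ℝ => x)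
  norm_num at this
  exact this

lemma cg_integrable_id : Integrable (fun z => z) (complexGaussian v) := by
  rw [cg_integrable_iff (fun z => z) measurable_id.aestronglyMeasurable]
  have h1 : Integrable (fun p : ℝ × ℝ => ((p.1 : ℂ)))
      ((gaussianReal 0 (v / 2).toNNReal).prod (gaussianReal 0 (v / 2).toNNReal)) := by
    have := (cg_coe_int hv).mul_prod (integrable_const (1 : ℂ) (μ := gaussianReal 0 (v / 2).toNNReal))
    simpa using this
  have h2 : Integrable (fun p : ℝ × ℝ => ((p.2 : ℂ) * Complex.I))
      ((gaussianReal 0 (v / 2).toNNReal).prod (gaussianReal 0 (v / 2).toNNReal)) := by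
    have := ((integrable_const (1 : ℂ) (μ := gaussianReal 0 (v / 2).toNNReal)).mul_prod
      (cg_coe_int hv))
    simpa using this.mul_const Complex.I
  exact h1.add h2

lemma cg_integral_id : ∫ z, z ∂(complexGaussian v) = 0 := by
  rw [cg_integral (fun z => z) measurable_id.aestronglyMeasurable]
  set g := gaussianReal 0 (v / 2).toNNReal with hg
  have h1 : Integrable (fun p : ℝ × ℝ => ((p.1 : ℂ))) (g.prod g) := by
    have := (cg_coe_int hv).mul_prod (integrable_const (1 : ℂ) (μ := g))
    simpa using this
  have h2 : Integrable (fun p : ℝ × ℝ => ((p.2 : ℂ) * Complex.I)) (g.prod g) := by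
    have := ((integrable_const (1 : ℂ) (μ := g)).mul_prod (cg_coe_int hv))
    simpa using this.mul_const Complex.I
  rw [integral_add h1 h2]
  have e1 : ∫ p : ℝ × ℝ, ((p.1 : ℂ)) ∂(g.prod g) = 0 := by
    have h := integral_prod_mul (μ := g) (ν := g) (fun x : ℝ => (x : ℂ)) (fun _ => (1 : ℂ))
    simp only [mul_one] at h
    rw [h, cg_coe_int0 hv, zero_mul]
  have e2 : ∫ p : ℝ × ℝ, ((p.2 : ℂ) * Complex.I) ∂(g.prod g) = 0 := by
    have h3 : (fun p : ℝ × ℝ => (p.2 : ℂ) * Complex.I)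
        = fun p : ℝ × ℝ => (1 : ℂ) * ((p.2 : ℂ) * Complex.I) := by funext p; ring
    rw [h3, integral_prod_mul (μ := g) (ν := g) (fun _ => (1 : ℂ))
      (fun x : ℝ => (x : ℂ) * Complex.I)]
    have h4 : ∫ x : ℝ, (x : ℂ) * Complex.I ∂g = (∫ x : ℝ, (x : ℂ) ∂g) * Complex.I := by
      simpa [smul_eq_mul] using integral_smul_const (μ := g) (f := fun x : ℝ => (x : ℂ)) Complex.I
    rw [h4, cg_coe_int0 hv, zero_mul, mul_zero]
  rw [e1, e2, add_zero]

lemma cg_integrable_conj : Integrable (fun z => (starRingEnd ℂ) z) (complexGaussian v) := by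
  have h := (cg_integrable_id hv).norm
  refine ⟨(Complex.continuous_conj.measurable).aestronglyMeasurable, ?_⟩
  simpa [hasFiniteIntegral_iff_norm] using (cg_integrable_id hv).2

lemma cg_integral_conj : ∫ z, (starRingEnd ℂ) z ∂(complexGaussian v) = 0 := by
  rw [integral_conj, cg_integral_id hv]
  simp

lemma cg_integrable_normSq :
    Integrable (fun z => (Complex.normSq z : ℝ)) (complexGaussian v) := by
  have key : Integrable (fun p : ℝ × ℝ => Complex.normSq ((p.1 : ℂ) + (p.2 : ℂ) * Complex.I))
      ((gaussianReal 0 (v / 2).toNNReal).prod (gaussianReal 0 (v / 2).toNNReal)) := by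
    have hsq : ∀ p : ℝ × ℝ, Complex.normSq ((p.1 : ℂ) + (p.2 : ℂ) * Complex.I)
        = p.1 ^ 2 + p.2 ^ 2 := by
      intro p; rw [Complex.normSq_add_mul_I]
    have h1 := (gaussianReal_integrable_sq _ (cg_w_ne hv)).mul_prod
      (integrable_const (1 : ℝ) (μ := gaussianReal 0 (v / 2).toNNReal))
    have h2 := (integrable_const (1 : ℝ) (μ := gaussianReal 0 (v / 2).toNNReal)).mul_prod
      (gaussianReal_integrable_sq _ (cg_w_ne hv))
    simp only [mul_one, one_mul] at h1 h2
    have := h1.add h2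
    apply this.congr
    filter_upwards with p
    rw [hsq]
    simp
  have hmeas : AEStronglyMeasurable (fun z => (Complex.normSq z : ℝ)) (complexGaussian v) :=
    Complex.continuous_normSq.measurable.aestronglyMeasurable
  rw [complexGaussian] at hmeas ⊢
  exact (integrable_map_measure hmeas cg_phi_meas.aemeasurable).mpr key

lemma cg_integral_normSq : ∫ z, (Complex.normSq z : ℝ) ∂(complexGaussian v) = v := by
  have hmeas : AEStronglyMeasurable (fun z => (Complex.normSq z : ℝ)) (complexGaussian v) :=
    Complex.continuous_normSq.measurable.aestronglyMeasurable
  rw [complexGaussian] at hmeas ⊢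
  rw [integral_map cg_phi_meas.aemeasurable hmeas]
  set g := gaussianReal 0 (v / 2).toNNReal with hg
  have hsq : ∀ p : ℝ × ℝ, Complex.normSq ((p.1 : ℂ) + (p.2 : ℂ) * Complex.I)
      = p.1 ^ 2 + p.2 ^ 2 := by
    intro p; rw [Complex.normSq_add_mul_I]
  have h1 := (gaussianReal_integrable_sq _ (cg_w_ne hv)).mul_prod (integrable_const (1 : ℝ) (μ := g))
  have h2 := (integrable_const (1 : ℝ) (μ := g)).mul_prod (gaussianReal_integrable_sq _ (cg_w_ne hv))
  simp only [mul_one, one_mul] at h1 h2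
  have e : ∫ p : ℝ × ℝ, Complex.normSq ((p.1 : ℂ) + (p.2 : ℂ) * Complex.I) ∂(g.prod g)
      = (∫ p : ℝ × ℝ, p.1 ^ 2 ∂(g.prod g)) + ∫ p : ℝ × ℝ, p.2 ^ 2 ∂(g.prod g) := by
    rw [← integral_add h1 h2]
    apply integral_congr_ae
    filter_upwards with p
    rw [hsq]
  rw [e]
  have ee1 : ∫ p : ℝ × ℝ, p.1 ^ 2 ∂(g.prod g) = v / 2 := by
    have h := integral_prod_mul (μ := g) (ν := g) (fun x : ℝ => x ^ 2) (fun _ => (1 : ℝ))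
    simp only [mul_one] at h
    rw [h, gaussianReal_integral_sq _ (cg_w_ne hv), cg_w_coe hv]
    simp
  have ee2 : ∫ p : ℝ × ℝ, p.2 ^ 2 ∂(g.prod g) = v / 2 := by
    have h := integral_prod_mul (μ := g) (ν := g) (fun _ => (1 : ℝ)) (fun x : ℝ => x ^ 2)
    simp only [one_mul] at h
    rw [h, gaussianReal_integral_sq _ (cg_w_ne hv), cg_w_coe hv]
    simp
  rw [ee1, ee2]; ring

lemma cg_integrable_mul_conj :
    Integrable (fun z => z * (starRingEnd ℂ) z) (complexGaussian v) := by
  have h := (cg_integrable_normSq hv).ofReal (𝕜 := ℂ)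
  apply h.congr
  filter_upwards with z
  rw [Complex.mul_conj]
  norm_num

lemma cg_integral_mul_conj :
    ∫ z, z * (starRingEnd ℂ) z ∂(complexGaussian v) = (v : ℂ) := by
  have e : ∫ z, z * (starRingEnd ℂ) z ∂(complexGaussian v)
      = ∫ z, ((Complex.normSq z : ℝ) : ℂ) ∂(complexGaussian v) := by
    apply integral_congr_ae
    filter_upwards with z
    rw [Complex.mul_conj]
  rw [e]
  have h := integral_ofReal (𝕜 := ℂ) (μ := complexGaussian v) (f := fun z => (Complex.normSq z : ℝ))
  norm_num at h
  rw [h, cg_integral_normSq hv]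

end CG
section Indep
variable {Ω : Type*} [MeasurableSpace Ω] {μ : Measure Ω} [IsProbabilityMeasure μ]

lemma indepFun_integral_mul_complex {Xf Yf : Ω → ℂ} (h : IndepFun Xf Yf μ)
    (hX : Integrable Xf μ) (hY : Integrable Yf μ) :
    ∫ ω, Xf ω * Yf ω ∂μ = (∫ ω, Xf ω ∂μ) * ∫ ω, Yf ω ∂μ := by
  have hmul : Integrable (fun ω => Xf ω * Yf ω) μ := h.integrable_mul hX hY
  have hre : ∀ f : Ω → ℂ, Integrable f μ → Integrable (fun ω => (f ω).re) μ := by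
    intro f hf
    simpa using hf.re
  have him : ∀ f : Ω → ℂ, Integrable f μ → Integrable (fun ω => (f ω).im) μ := by
    intro f hf
    simpa using hf.im
  have hac : IndepFun (fun ω => (Xf ω).re) (fun ω => (Yf ω).re) μ :=
    h.comp Complex.measurable_re Complex.measurable_re
  have had : IndepFun (fun ω => (Xf ω).re) (fun ω => (Yf ω).im) μ :=
    h.comp Complex.measurable_re Complex.measurable_im
  have hbc : IndepFun (fun ω => (Xf ω).im) (fun ω => (Yf ω).re) μ :=
    h.comp Complex.measurable_im Complex.measurable_re
  have hbd : IndepFun (fun ω => (Xf ω).im) (fun ω => (Yf ω).im) μ :=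
    h.comp Complex.measurable_im Complex.measurable_im
  have iac : Integrable (fun ω => (Xf ω).re * (Yf ω).re) μ :=
    hac.integrable_mul (hre _ hX) (hre _ hY)
  have iad : Integrable (fun ω => (Xf ω).re * (Yf ω).im) μ :=
    had.integrable_mul (hre _ hX) (him _ hY)
  have ibc : Integrable (fun ω => (Xf ω).im * (Yf ω).re) μ :=
    hbc.integrable_mul (him _ hX) (hre _ hY)
  have ibd : Integrable (fun ω => (Xf ω).im * (Yf ω).im) μ :=
    hbd.integrable_mul (him _ hX) (him _ hY)
  have eXre : (∫ ω, Xf ω ∂μ).re = ∫ ω, (Xf ω).re ∂μ := by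
    have := integral_re hX; simpa using this.symm
  have eXim : (∫ ω, Xf ω ∂μ).im = ∫ ω, (Xf ω).im ∂μ := by
    have := integral_im hX; simpa using this.symm
  have eYre : (∫ ω, Yf ω ∂μ).re = ∫ ω, (Yf ω).re ∂μ := by
    have := integral_re hY; simpa using this.symm
  have eYim : (∫ ω, Yf ω ∂μ).im = ∫ ω, (Yf ω).im ∂μ := by
    have := integral_im hY; simpa using this.symm
  apply Complex.ext
  · have e1 : (∫ ω, Xf ω * Yf ω ∂μ).re = ∫ ω, (Xf ω * Yf ω).re ∂μ := by
      have := integral_re hmul; simpa using this.symm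
    rw [e1, Complex.mul_re, eXre, eXim, eYre, eYim]
    have e2 : (fun ω => (Xf ω * Yf ω).re)
        = fun ω => (Xf ω).re * (Yf ω).re - (Xf ω).im * (Yf ω).im := by
      funext ω; rw [Complex.mul_re]
    rw [e2, integral_sub iac ibd,
      hac.integral_fun_mul_eq_mul_integral (hre _ hX).1 (hre _ hY).1,
      hbd.integral_fun_mul_eq_mul_integral (him _ hX).1 (him _ hY).1]
  · have e1 : (∫ ω, Xf ω * Yf ω ∂μ).im = ∫ ω, (Xf ω * Yf ω).im ∂μ := by
      have := integral_im hmul; simpa using this.symm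
    rw [e1, Complex.mul_im, eXre, eXim, eYre, eYim]
    have e2 : (fun ω => (Xf ω * Yf ω).im)
        = fun ω => (Xf ω).re * (Yf ω).im + (Xf ω).im * (Yf ω).re := by
      funext ω; rw [Complex.mul_im]
    rw [e2, integral_add iad ibc,
      had.integral_fun_mul_eq_mul_integral (hre _ hX).1 (him _ hY).1,
      hbc.integral_fun_mul_eq_mul_integral (him _ hX).1 (hre _ hY).1]

lemma iIndep_prod_integral {ι : Type*} [DecidableEq ι] {g : ι → Ω → ℂ}
    (hg : ∀ i, Measurable (g i)) (hi : iIndepFun g μ)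
    (s : Finset ι) (hint : ∀ i ∈ s, Integrable (g i) μ) :
    Integrable (fun ω => ∏ i ∈ s, g i ω) μ ∧
      ∫ ω, ∏ i ∈ s, g i ω ∂μ = ∏ i ∈ s, ∫ ω, g i ω ∂μ := by
  classical
  induction s using Finset.induction with
  | empty => simp
  | insert a s ha IH =>
    obtain ⟨IH1, IH2⟩ := IH (fun i hi' => hint i (Finset.mem_insert_of_mem hi'))
    have hpa : Integrable (g a) μ := hint a (Finset.mem_insert_self a s)
    have hprodfun : (fun ω => ∏ i ∈ s, g i ω) = ∏ i ∈ s, g i := by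
      funext ω; rw [Finset.prod_apply]
    have hindepf : IndepFun (fun ω => ∏ i ∈ s, g i ω) (g a) μ := by
      rw [hprodfun]
      exact hi.indepFun_finset_prod_of_notMem hg ha
    have hmul := hindepf.integrable_mul IH1 hpa
    have hpw : (fun ω => ∏ i ∈ insert a s, g i ω)
        = fun ω => (∏ i ∈ s, g i ω) * g a ω := by
      funext ω; rw [Finset.prod_insert ha]; ring
    constructor
    · rw [hpw]; exact hmul
    · rw [hpw, indepFun_integral_mul_complex hindepf IH1 hpa, IH2,
        Finset.prod_insert ha]
      ring

end Indep
section Core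
variable {Ω : Type*} [MeasurableSpace Ω] {μ : Measure Ω} [IsProbabilityMeasure μ]

lemma gauss_orthogonality {n : ℕ} {σ : ℝ} (hσ : 0 < σ)
    (Z : Fin n × Fin n → Ω → ℂ) (hZmeas : ∀ p, Measurable (Z p))
    (hindep : iIndepFun Z μ)
    (hlaw : ∀ p, μ.map (Z p) = complexGaussian (σ ^ 2))
    (A A' : Finset (Fin n × Fin n)) :
    Integrable (fun ω => (∏ p ∈ A, Z p ω) * (starRingEnd ℂ) (∏ p ∈ A', Z p ω)) μ ∧
      ∫ ω, (∏ p ∈ A, Z p ω) * (starRingEnd ℂ) (∏ p ∈ A', Z p ω) ∂μ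
        = if A = A' then ((σ ^ 2 : ℝ) : ℂ) ^ A.card else 0 := by
  classical
  have hv : (0 : ℝ) < σ ^ 2 := by positivity
  set v : ℝ := σ ^ 2 with hvdef
  -- transfer of integrability and integrals
  have htransInt : ∀ (p : Fin n × Fin n) (f : ℂ → ℂ), Measurable f →
      Integrable f (complexGaussian v) → Integrable (fun ω => f (Z p ω)) μ := by
    intro p f hf hfi
    have hasm : AEStronglyMeasurable f (μ.map (Z p)) := by
      rw [hlaw p]; exact hf.aestronglyMeasurable
    have := (integrable_map_measure hasm (hZmeas p).aemeasurable).mp (by rw [hlaw p]; exact hfi)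
    exact this
  have htransVal : ∀ (p : Fin n × Fin n) (f : ℂ → ℂ), Measurable f →
      ∫ ω, f (Z p ω) ∂μ = ∫ z, f z ∂(complexGaussian v) := by
    intro p f hf
    have hasm : AEStronglyMeasurable f (μ.map (Z p)) := by
      rw [hlaw p]; exact hf.aestronglyMeasurable
    rw [← integral_map (hZmeas p).aemeasurable hasm, hlaw p]
  -- the combined factor functions
  set F : (Fin n × Fin n) → ℂ → ℂ := fun p z =>
    (if p ∈ A then z else 1) * (if p ∈ A' then (starRingEnd ℂ) z else 1) with hFdef
  have hconjm : Measurable (starRingEnd ℂ) := Complex.continuous_conj.measurable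
  have hFmeas : ∀ p, Measurable (F p) := by
    intro p
    by_cases h1 : p ∈ A <;> by_cases h2 : p ∈ A' <;>
      simp only [hFdef, h1, h2, if_true, if_false, mul_one, one_mul] <;>
      first
        | exact measurable_id.mul hconjm
        | exact measurable_id
        | exact hconjm
        | exact measurable_const
  have hFint : ∀ p, Integrable (fun ω => F p (Z p ω)) μ := by
    intro p
    by_cases h1 : p ∈ A <;> by_cases h2 : p ∈ A' <;>
      simp only [hFdef, h1, h2, if_true, if_false, mul_one, one_mul]
    · exact htransInt p _ (measurable_id.mul hconjm) (cg_integrable_mul_conj hv)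
    · exact htransInt p _ measurable_id (cg_integrable_id hv)
    · exact htransInt p _ hconjm (cg_integrable_conj hv)
    · exact integrable_const 1
  have hFval : ∀ p, ∫ ω, F p (Z p ω) ∂μ = if p ∈ A ∩ A' then (v : ℂ) else
      (if p ∈ A ∪ A' then 0 else 1) := by
    intro p
    by_cases h1 : p ∈ A <;> by_cases h2 : p ∈ A' <;>
      simp only [hFdef, h1, h2, if_true, if_false, mul_one, one_mul, Finset.mem_inter,
        Finset.mem_union, true_and, and_true, false_and, and_false, true_or, or_true,
        false_or, or_false]
    · rw [htransVal p (fun z => z * (starRingEnd ℂ) z) (by exact measurable_id.mul hconjm),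
        cg_integral_mul_conj hv]
    · rw [htransVal p (fun z => z) (by exact measurable_id), cg_integral_id hv]
    · rw [htransVal p (fun z => (starRingEnd ℂ) z) (by exact hconjm), cg_integral_conj hv]
    · simp
  have hcomp : iIndepFun
      (fun p ω => F p (Z p ω)) μ := hindep.comp F hFmeas
  have hpw : ∀ ω, (∏ p ∈ A, Z p ω) * (starRingEnd ℂ) (∏ p ∈ A', Z p ω)
      = ∏ p ∈ A ∪ A', F p (Z p ω) := by
    intro ω
    rw [map_prod]
    rw [hFdef]
    simp only []
    rw [Finset.prod_mul_distrib]
    congr 1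
    · rw [Finset.prod_ite_mem (A ∪ A') A (fun p => Z p ω), Finset.union_inter_cancel_left]
    · rw [Finset.prod_ite_mem (A ∪ A') A' (fun p => (starRingEnd ℂ) (Z p ω)),
        Finset.union_inter_cancel_right]
  obtain ⟨hint, hval⟩ := iIndep_prod_integral
    (g := fun p ω => F p (Z p ω)) (fun p => (hFmeas p).comp (hZmeas p)) hcomp (A ∪ A')
    (fun p _ => hFint p)
  constructor
  · apply hint.congr
    filter_upwards with ω
    rw [hpw ω]
  · have e : ∫ ω, (∏ p ∈ A, Z p ω) * (starRingEnd ℂ) (∏ p ∈ A', Z p ω) ∂μ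
        = ∫ ω, ∏ p ∈ A ∪ A', F p (Z p ω) ∂μ := by
      apply integral_congr_ae
      filter_upwards with ω
      rw [hpw ω]
    rw [e, hval]
    by_cases hAA : A = A'
    · subst hAA
      rw [if_pos rfl]
      have : ∀ p ∈ A ∪ A, ∫ ω, F p (Z p ω) ∂μ = (v : ℂ) := by
        intro p hp
        rw [hFval p, if_pos]
        simpa using hp
      rw [Finset.prod_congr rfl this, Finset.prod_const]
      congr 1
      simp
    · rw [if_neg hAA]
      have : ∃ p, (p ∈ A ∧ p ∉ A') ∨ (p ∈ A' ∧ p ∉ A) := by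
        by_contra hc
        push_neg at hc
        apply hAA
        ext p
        have := hc p
        exact ⟨fun hp => this.1 hp, fun hp => this.2 hp⟩
      obtain ⟨p, hp⟩ := this
      have hpu : p ∈ A ∪ A' := by
        rcases hp with ⟨h1, _⟩ | ⟨h1, _⟩
        · exact Finset.mem_union_left _ h1
        · exact Finset.mem_union_right _ h1
      apply Finset.prod_eq_zero hpu
      have hnot : p ∉ A ∩ A' := by
        rw [Finset.mem_inter]
        rintro ⟨hA, hA'⟩
        rcases hp with ⟨_, h2⟩ | ⟨_, h2⟩
        · exact h2 hA'
        · exact h2 hA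
      rw [hFval p, if_neg hnot, if_pos hpu]

end Core
lemma card_fixing_perms {n : ℕ} (T : Finset (Fin n)) :
    (Finset.univ.filter (fun π : Equiv.Perm (Fin n) => ∀ i ∈ T, π i = i)).card
      ≤ (n - T.card).factorial := by
  classical
  have hfix : ∀ π : Equiv.Perm (Fin n), (∀ i ∈ T, π i = i) →
      ∀ x : Fin n, x ∈ Tᶜ ↔ π x ∈ Tᶜ := by
    intro π hπ x
    simp only [Finset.mem_compl]
    constructor
    · intro hx hmem
      have h1 : π (π x) = π x := hπ (π x) hmem
      have h2 : π x = x := π.injective h1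
      exact hx (h2 ▸ hmem)
    · intro hx hmem
      exact hx (by rw [hπ x hmem]; exact hmem)
  set f : Equiv.Perm (Fin n) → Equiv.Perm {x : Fin n // x ∈ Tᶜ} := fun π =>
    if h : ∀ x : Fin n, x ∈ Tᶜ ↔ π x ∈ Tᶜ then π.subtypePerm (fun x => (h x).symm) else 1 with hfdef
  have hinj : Set.InjOn f
      (Finset.univ.filter (fun π : Equiv.Perm (Fin n) => ∀ i ∈ T, π i = i)) := by
    intro π hπ π' hπ' heq
    have hπT : ∀ i ∈ T, π i = i := (Finset.mem_filter.mp (Finset.mem_coe.mp hπ)).2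
    have hπ'T : ∀ i ∈ T, π' i = i := (Finset.mem_filter.mp (Finset.mem_coe.mp hπ')).2
    have h1 := hfix π hπT
    have h2 := hfix π' hπ'T
    rw [hfdef] at heq
    simp only [dif_pos h1, dif_pos h2] at heq
    apply Equiv.ext
    intro x
    by_cases hx : x ∈ T
    · rw [hπT x hx, hπ'T x hx]
    · have hxc : x ∈ Tᶜ := Finset.mem_compl.mpr hx
      have h3 := congrArg (fun e : Equiv.Perm {y : Fin n // y ∈ Tᶜ} => e ⟨x, hxc⟩) heq
      simp only [Equiv.Perm.subtypePerm_apply] at h3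
      exact Subtype.ext_iff.mp h3
  have hcard := Finset.card_le_card_of_injOn f (fun _ _ => Finset.mem_univ _) hinj
  calc (Finset.univ.filter (fun π : Equiv.Perm (Fin n) => ∀ i ∈ T, π i = i)).card
      ≤ (Finset.univ : Finset (Equiv.Perm {x : Fin n // x ∈ Tᶜ})).card := hcard
    _ = (n - T.card).factorial := by
        rw [Finset.card_univ, Fintype.card_perm, Fintype.card_coe, Finset.card_compl,
          Fintype.card_fin]
lemma geom_tail_bound {ε : ℝ} (hε : 0 < ε) (hε1 : ε < 1) (n : ℕ) :
    ∑ k ∈ Finset.range n, ε ^ (2 * (n - k)) ≤ ε ^ 2 / (1 - ε ^ 2) := by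
  have he2 : ε ^ 2 < 1 := by nlinarith
  have he2pos : 0 < ε ^ 2 := by positivity
  have hd : 0 < 1 - ε ^ 2 := by linarith
  have hre : ∑ k ∈ Finset.range n, ε ^ (2 * (n - k))
      = ∑ j ∈ Finset.range n, ε ^ (2 * (j + 1)) := by
    rw [← Finset.sum_range_reflect]
    apply Finset.sum_congr rfl
    intro j hj
    have h1 : n - (n - 1 - j) = j + 1 := by
      have := Finset.mem_range.mp hj; omega
    rw [h1]
  rw [hre]
  have h2 : ∀ j : ℕ, ε ^ (2 * (j + 1)) = ε ^ 2 * (ε ^ 2) ^ j := by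
    intro j; rw [pow_mul, pow_succ]; ring
  simp_rw [h2]
  rw [← Finset.mul_sum]
  have hgeom : ∑ j ∈ Finset.range n, (ε ^ 2) ^ j ≤ 1 / (1 - ε ^ 2) := by
    rw [geom_sum_eq (ne_of_lt he2)]
    rw [show (ε ^ 2) ^ n - 1 = -(1 - (ε ^ 2) ^ n) by ring, show ε ^ 2 - 1 = -(1 - ε ^ 2) by ring,
      neg_div_neg_eq]
    gcongr
    nlinarith [pow_nonneg (le_of_lt he2pos) n]
  calc ε ^ 2 * ∑ j ∈ Finset.range n, (ε ^ 2) ^ j ≤ ε ^ 2 * (1 / (1 - ε ^ 2)) :=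
        mul_le_mul_of_nonneg_left hgeom (by positivity)
    _ = ε ^ 2 / (1 - ε ^ 2) := by ring

/-- if `B` is diagonal with entries `|Σ_i| ≥ ε⁻¹ σ √n` and `X` has i.i.d.
centered complex Gaussian entries of variance `σ²`, then
`Var(det(B+X)) ≤ (ε²/(1−ε²))·|det B|²`. -/
theorem stmt1 {Ω : Type*} [MeasurableSpace Ω] (μ : Measure Ω) [IsProbabilityMeasure μ]
    (n : ℕ) (ε σ : ℝ) (hε : 0 < ε) (hε1 : ε < 1) (hσ : 0 < σ)
    (b : Fin n → ℂ) (hb : ∀ i, ε⁻¹ * σ * Real.sqrt n ≤ ‖b i‖)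
    (X : Ω → Matrix (Fin n) (Fin n) ℂ)
    (hmeas : ∀ i j, Measurable (fun ω => X ω i j))
    (hindep : iIndepFun
      (fun (p : Fin n × Fin n) ω => X ω p.1 p.2) μ)
    (hlaw : ∀ i j, μ.map (fun ω => X ω i j) = complexGaussian (σ ^ 2)) :
    ∫ ω, ‖(Matrix.diagonal b + X ω).det
        - ∫ ω', (Matrix.diagonal b + X ω').det ∂μ‖ ^ 2 ∂μ
      ≤ ε ^ 2 / (1 - ε ^ 2) * ‖(Matrix.diagonal b).det‖ ^ 2 := by

  classical
  have hv : (0 : ℝ) < σ ^ 2 := by positivity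
  set Z : Fin n × Fin n → Ω → ℂ := fun p ω => X ω p.1 p.2 with hZdef
  have hZmeas : ∀ p : Fin n × Fin n, Measurable (Z p) := fun p => hmeas p.1 p.2
  have hlaw' : ∀ p : Fin n × Fin n, μ.map (Z p) = complexGaussian (σ ^ 2) :=
    fun p => hlaw p.1 p.2
  have hindep' : iIndepFun Z μ := hindep
  set c : Equiv.Perm (Fin n) × Finset (Fin n) → ℂ := fun j =>
    ((Equiv.Perm.sign j.1 : ℤ) : ℂ) * ∏ i ∈ j.2, (if j.1 i = i then b i else 0) with hcdef
  set A : Equiv.Perm (Fin n) × Finset (Fin n) → Finset (Fin n × Fin n) := fun j =>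
    (j.2)ᶜ.image (fun i => (j.1 i, i)) with hAdef
  set M : Equiv.Perm (Fin n) × Finset (Fin n) → Ω → ℂ := fun j ω => ∏ p ∈ A j, Z p ω with hMdef
  have hM_eq : ∀ (j : Equiv.Perm (Fin n) × Finset (Fin n)) (ω : Ω),
      M j ω = ∏ i ∈ (j.2)ᶜ, Z (j.1 i, i) ω := by
    intro j ω
    rw [hMdef, hAdef]
    exact Finset.prod_image (fun x _ y _ hxy => (Prod.ext_iff.mp hxy).2)
  have hAcard : ∀ j : Equiv.Perm (Fin n) × Finset (Fin n), (A j).card = n - (j.2).card := by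
    intro j
    rw [hAdef]
    rw [Finset.card_image_of_injOn (fun x _ y _ hxy => (Prod.ext_iff.mp hxy).2),
      Finset.card_compl, Fintype.card_fin]
  -- determinant expansion
  have hdet : ∀ ω, (Matrix.diagonal b + X ω).det
      = ∑ j : Equiv.Perm (Fin n) × Finset (Fin n), c j * M j ω := by
    intro ω
    rw [Fintype.sum_prod_type, Matrix.det_apply']
    have hentry : ∀ (π : Equiv.Perm (Fin n)) (i : Fin n),
        (Matrix.diagonal b + X ω) (π i) i = (if π i = i then b i else 0) + Z (π i, i) ω := by
      intro π i
      rw [Matrix.add_apply]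
      congr 1
      by_cases h : π i = i
      · rw [Matrix.diagonal_apply, if_pos h, if_pos h, h]
      · rw [Matrix.diagonal_apply, if_neg h, if_neg h]
    apply Finset.sum_congr rfl
    intro π _
    rw [show (∏ i : Fin n, (Matrix.diagonal b + X ω) (π i) i)
        = ∏ i : Fin n, ((if π i = i then b i else 0) + Z (π i, i) ω) from
      Finset.prod_congr rfl (fun i _ => hentry π i)]
    rw [Finset.prod_add, Finset.powerset_univ, Finset.mul_sum]
    apply Finset.sum_congr rfl
    intro T _
    rw [hM_eq (π, T) ω, hcdef]
    simp only []
    rw [Finset.compl_eq_univ_sdiff]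
    ring
  -- the constant term
  have hconstsum : ∑ π : Equiv.Perm (Fin n), c (π, Finset.univ) = (Matrix.diagonal b).det := by
    rw [Matrix.det_diagonal]
    have hterm : ∀ π : Equiv.Perm (Fin n),
        c (π, Finset.univ) = if π = 1 then ∏ i, b i else 0 := by
      intro π
      by_cases hπ : π = 1
      · subst hπ
        rw [if_pos rfl, hcdef]
        simp
      · rw [if_neg hπ, hcdef]
        obtain ⟨i, hi⟩ : ∃ i, π i ≠ i := by
          by_contra hc
          push_neg at hc
          exact hπ (Equiv.ext hc)
        simp only []
        rw [Finset.prod_eq_zero (Finset.mem_univ i) (show (if π i = i then b i else 0) = 0 from if_neg hi), mul_zero]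
    rw [Finset.sum_congr rfl (fun π _ => hterm π), Finset.sum_ite_eq' Finset.univ 1
      (fun _ => ∏ i, b i), if_pos (Finset.mem_univ _)]
  -- orthogonality facts
  have hMM : ∀ j k : Equiv.Perm (Fin n) × Finset (Fin n),
      Integrable (fun ω => M j ω * (starRingEnd ℂ) (M k ω)) μ ∧
        ∫ ω, M j ω * (starRingEnd ℂ) (M k ω) ∂μ
          = if A j = A k then ((σ ^ 2 : ℝ) : ℂ) ^ (A j).card else 0 := by
    intro j k
    exact gauss_orthogonality hσ Z hZmeas hindep' hlaw' (A j) (A k)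
  have hMint : ∀ j, Integrable (M j) μ := by
    intro j
    have h := (gauss_orthogonality hσ Z hZmeas hindep' hlaw' (A j) ∅).1
    simp only [Finset.prod_empty, _root_.map_one, mul_one] at h
    exact h
  have hAempty : ∀ j : Equiv.Perm (Fin n) × Finset (Fin n),
      A j = ∅ ↔ j.2 = Finset.univ := by
    intro j
    rw [hAdef]
    simp only [Finset.image_eq_empty]
    constructor
    · intro h
      have := congrArg (fun s => sᶜ) h
      simpa using this
    · intro h
      rw [h, Finset.compl_univ]
  have hMval : ∀ j, ∫ ω, M j ω ∂μ = if j.2 = Finset.univ then 1 else 0 := by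
    intro j
    have h := (gauss_orthogonality hσ Z hZmeas hindep' hlaw' (A j) ∅).2
    simp only [Finset.prod_empty, _root_.map_one, mul_one] at h
    rw [h]
    by_cases hj : j.2 = Finset.univ
    · rw [if_pos hj, if_pos ((hAempty j).mpr hj), (hAempty j).mpr hj]
      simp
    · rw [if_neg hj, if_neg (fun hc => hj ((hAempty j).mp hc))]
  -- expectation of the determinant
  have hdetfun : (fun ω => (Matrix.diagonal b + X ω).det)
      = fun ω => ∑ j : Equiv.Perm (Fin n) × Finset (Fin n), c j * M j ω := funext hdet
  have hED : ∫ ω, (Matrix.diagonal b + X ω).det ∂μ = (Matrix.diagonal b).det := by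
    rw [hdetfun, integral_finset_sum _ (fun j _ => (hMint j).const_mul (c j))]
    have h1 : ∀ j : Equiv.Perm (Fin n) × Finset (Fin n),
        ∫ ω, c j * M j ω ∂μ = if j.2 = Finset.univ then c j else 0 := by
      intro j
      rw [integral_const_mul, hMval j]
      by_cases hj : j.2 = Finset.univ <;> simp [hj]
    rw [Finset.sum_congr rfl (fun j _ => h1 j), ← hconstsum, Fintype.sum_prod_type]
    apply Finset.sum_congr rfl
    intro π _
    rw [Finset.sum_ite_eq' Finset.univ Finset.univ (fun T => c (π, T)),
      if_pos (Finset.mem_univ _)]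
  rw [hED]
  -- the centered variable
  set S : Finset (Equiv.Perm (Fin n) × Finset (Fin n)) :=
    Finset.univ.filter (fun j => j.2 ≠ Finset.univ) with hSdef
  have hW : ∀ ω, (Matrix.diagonal b + X ω).det - (Matrix.diagonal b).det
      = ∑ j ∈ S, c j * M j ω := by
    intro ω
    rw [hdet ω]
    have hsplit := Finset.sum_filter_add_sum_filter_not Finset.univ
      (fun j : Equiv.Perm (Fin n) × Finset (Fin n) => j.2 ≠ Finset.univ)
      (fun j => c j * M j ω)
    have hrest : ∑ j ∈ Finset.univ.filter
        (fun j : Equiv.Perm (Fin n) × Finset (Fin n) => ¬ j.2 ≠ Finset.univ),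
        c j * M j ω = (Matrix.diagonal b).det := by
      have h2 : ∀ j ∈ Finset.univ.filter
          (fun j : Equiv.Perm (Fin n) × Finset (Fin n) => ¬ j.2 ≠ Finset.univ),
          c j * M j ω = c j := by
        intro j hj
        have hju : j.2 = Finset.univ := not_not.mp (Finset.mem_filter.mp hj).2
        have : M j ω = 1 := by
          rw [hMdef]
          simp only []
          rw [(hAempty j).mpr hju, Finset.prod_empty]
        rw [this, mul_one]
      rw [Finset.sum_congr rfl h2, Finset.sum_filter, ← hconstsum, Fintype.sum_prod_type]
      apply Finset.sum_congr rfl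
      intro π _
      have : ∀ T : Finset (Fin n),
          (if ¬ T ≠ Finset.univ then c (π, T) else 0) = if T = Finset.univ then c (π, T) else 0 := by
        intro T
        by_cases h : T = Finset.univ <;> simp [h]
      rw [Finset.sum_congr rfl (fun T _ => this T),
        Finset.sum_ite_eq' Finset.univ Finset.univ (fun T => c (π, T)), if_pos (Finset.mem_univ _)]
    rw [← hsplit, hrest, hSdef]
    ring
  -- injectivity of the monomial map on nonzero coefficients
  have hfixc : ∀ (ρ : Equiv.Perm (Fin n)) (T : Finset (Fin n)),
      c (ρ, T) ≠ 0 → ∀ i ∈ T, ρ i = i := by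
    intro ρ T hc0 i hi
    by_contra hne
    apply hc0
    rw [hcdef]
    simp only []
    rw [Finset.prod_eq_zero hi (show (if ρ i = i then b i else 0) = 0 from if_neg hne), mul_zero]
  have hmemA : ∀ (ρ : Equiv.Perm (Fin n)) (U : Finset (Fin n)) (q : Fin n × Fin n),
      q ∈ Uᶜ.image (fun i => (ρ i, i)) ↔ (q.2 ∈ Uᶜ ∧ q.1 = ρ q.2) := by
    intro ρ U q
    simp only [Finset.mem_image]
    constructor
    · rintro ⟨i, hi, rfl⟩
      exact ⟨hi, rfl⟩
    · rintro ⟨h2, h1⟩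
      refine ⟨q.2, h2, ?_⟩
      rw [← h1]
  have hkey : ∀ j k : Equiv.Perm (Fin n) × Finset (Fin n),
      A j = A k → c j ≠ 0 → c k ≠ 0 → j = k := by
    rintro ⟨π, T⟩ ⟨π', T'⟩ hA hc1 hc2
    rw [hAdef] at hA
    simp only [] at hA
    have hTT : Tᶜ = T'ᶜ := by
      ext i
      constructor
      · intro hi
        have h3 : ((π i, i) : Fin n × Fin n) ∈ T'ᶜ.image (fun i => (π' i, i)) := by
          rw [← hA]
          exact Finset.mem_image_of_mem _ hi
        exact ((hmemA π' T' (π i, i)).mp h3).1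
      · intro hi
        have h3 : ((π' i, i) : Fin n × Fin n) ∈ Tᶜ.image (fun i => (π i, i)) := by
          rw [hA]
          exact Finset.mem_image_of_mem _ hi
        exact ((hmemA π T (π' i, i)).mp h3).1
    have hT : T = T' := by
      have := congrArg (fun s => sᶜ) hTT
      simpa using this
    subst hT
    have hagree : ∀ i ∈ Tᶜ, π i = π' i := by
      intro i hi
      have h3 : ((π i, i) : Fin n × Fin n) ∈ Tᶜ.image (fun i => (π' i, i)) := by
        rw [← hA]
        exact Finset.mem_image_of_mem _ hi
      exact ((hmemA π' T (π i, i)).mp h3).2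
    have hππ : π = π' := by
      apply Equiv.ext
      intro i
      by_cases hi : i ∈ T
      · rw [hfixc π T hc1 i hi, hfixc π' T hc2 i hi]
      · exact hagree i (Finset.mem_compl.mpr hi)
    rw [hππ]
  -- second moment identity
  have habs2 : ∫ ω, ‖(Matrix.diagonal b + X ω).det - (Matrix.diagonal b).det‖ ^ 2 ∂μ
      = ∑ j ∈ S, Complex.normSq (c j) * (σ ^ 2) ^ (n - (j.2).card) := by
    have hptC : ∀ ω, ((Complex.normSq ((Matrix.diagonal b + X ω).det
        - (Matrix.diagonal b).det) : ℝ) : ℂ)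
        = ∑ j ∈ S, ∑ k ∈ S, (c j * (starRingEnd ℂ) (c k)) * (M j ω * (starRingEnd ℂ) (M k ω)) := by
      intro ω
      rw [← Complex.mul_conj, hW ω, _root_.map_sum, Finset.sum_mul_sum]
      apply Finset.sum_congr rfl
      intro j _
      apply Finset.sum_congr rfl
      intro k _
      rw [_root_.map_mul]
      ring
    have hintterm : ∀ j k : Equiv.Perm (Fin n) × Finset (Fin n),
        Integrable (fun ω => (c j * (starRingEnd ℂ) (c k)) * (M j ω * (starRingEnd ℂ) (M k ω))) μ :=
      fun j k => ((hMM j k).1).const_mul _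
    have hCint : ∫ ω, ((Complex.normSq ((Matrix.diagonal b + X ω).det
        - (Matrix.diagonal b).det) : ℝ) : ℂ) ∂μ
        = ∑ j ∈ S, ∑ k ∈ S, (c j * (starRingEnd ℂ) (c k))
            * (if A j = A k then ((σ ^ 2 : ℝ) : ℂ) ^ (A j).card else 0) := by
      rw [integral_congr_ae (Filter.Eventually.of_forall hptC),
        integral_finset_sum _ (fun j _ => integrable_finset_sum _ (fun k _ => hintterm j k))]
      apply Finset.sum_congr rfl
      intro j _
      rw [integral_finset_sum _ (fun k _ => hintterm j k)]
      apply Finset.sum_congr rfl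
      intro k _
      rw [integral_const_mul, (hMM j k).2]
    have hdiag : ∑ j ∈ S, ∑ k ∈ S, (c j * (starRingEnd ℂ) (c k))
        * (if A j = A k then ((σ ^ 2 : ℝ) : ℂ) ^ (A j).card else 0)
        = ∑ j ∈ S, ((Complex.normSq (c j) * (σ ^ 2) ^ (n - (j.2).card) : ℝ) : ℂ) := by
      apply Finset.sum_congr rfl
      intro j hj
      rw [Finset.sum_eq_single_of_mem j hj]
      · rw [if_pos rfl, hAcard j, Complex.ofReal_mul, Complex.ofReal_pow, ← Complex.mul_conj]
        push_cast
        ring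
      · intro k _ hkj
        by_cases hAjk : A j = A k
        · by_cases hcj : c j = 0
          · rw [hcj]
            simp
          · by_cases hck : c k = 0
            · rw [hck]
              simp
            · exact absurd (hkey j k hAjk hcj hck).symm hkj
        · rw [if_neg hAjk, mul_zero]
    have hofr' : ∀ g : Ω → ℝ, ∫ x, ((g x : ℝ) : ℂ) ∂μ = ((∫ x, g x ∂μ : ℝ) : ℂ) := by
      intro g
      have h := integral_ofReal (𝕜 := ℂ) (μ := μ) (f := g)
      norm_num at h
      exact h
    have hofr := hofr' (fun ω => Complex.normSq ((Matrix.diagonal b + X ω).det - (Matrix.diagonal b).det))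
    have hfinal : ((∫ ω, Complex.normSq ((Matrix.diagonal b + X ω).det
        - (Matrix.diagonal b).det) ∂μ : ℝ) : ℂ)
        = ((∑ j ∈ S, Complex.normSq (c j) * (σ ^ 2) ^ (n - (j.2).card) : ℝ) : ℂ) := by
      rw [← hofr, hCint, hdiag, Complex.ofReal_sum]
    have := Complex.ofReal_inj.mp hfinal
    rw [← this]
    apply integral_congr_ae
    filter_upwards with ω
    rw [Complex.sq_norm]
  rw [habs2]
  -- now the combinatorial bound
  set P : ℝ := ∏ i, Complex.normSq (b i) with hPdef
  have hRHS : ‖(Matrix.diagonal b).det‖ ^ 2 = P := by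
    rw [Complex.sq_norm, Matrix.det_diagonal, _root_.map_prod]
  -- group the sum by T
  have hgroup : ∑ j ∈ S, Complex.normSq (c j) * (σ ^ 2) ^ (n - (j.2).card)
      = ∑ T ∈ Finset.univ.filter (fun T : Finset (Fin n) => T ≠ Finset.univ),
          (∑ π : Equiv.Perm (Fin n), Complex.normSq (c (π, T))) * (σ ^ 2) ^ (n - T.card) := by
    rw [hSdef, Finset.sum_filter, Fintype.sum_prod_type, Finset.sum_comm, Finset.sum_filter]
    apply Finset.sum_congr rfl
    intro T _
    by_cases hT : T ≠ Finset.univ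
    · rw [if_pos hT, Finset.sum_mul]
      apply Finset.sum_congr rfl
      intro π _
      rw [if_pos hT]
    · rw [if_neg hT]
      apply Finset.sum_eq_zero
      intro π _
      rw [if_neg hT]
  rw [hgroup]
  -- bound the π-sum
  have hπsum : ∀ T : Finset (Fin n), (∑ π : Equiv.Perm (Fin n), Complex.normSq (c (π, T)))
      ≤ ((n - T.card).factorial : ℝ) * ∏ i ∈ T, Complex.normSq (b i) := by
    intro T
    have hterm : ∀ π : Equiv.Perm (Fin n), Complex.normSq (c (π, T))
        = if (∀ i ∈ T, π i = i) then ∏ i ∈ T, Complex.normSq (b i) else 0 := by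
      intro π
      rw [hcdef]
      simp only []
      rw [_root_.map_mul]
      have hsign : Complex.normSq (((Equiv.Perm.sign π : ℤ) : ℂ)) = 1 := by
        rcases Int.units_eq_one_or (Equiv.Perm.sign π) with h | h <;> rw [h] <;> norm_num
      rw [hsign, one_mul, _root_.map_prod]
      by_cases h : ∀ i ∈ T, π i = i
      · rw [if_pos h]
        apply Finset.prod_congr rfl
        intro i hi
        rw [if_pos (h i hi)]
      · rw [if_neg h]
        push_neg at h
        obtain ⟨i, hi, hne⟩ := h
        apply Finset.prod_eq_zero hi
        rw [if_neg hne, _root_.map_zero]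
    rw [Finset.sum_congr rfl (fun π _ => hterm π), ← Finset.sum_filter, Finset.sum_const,
      nsmul_eq_mul]
    have hK : (0 : ℝ) ≤ ∏ i ∈ T, Complex.normSq (b i) :=
      Finset.prod_nonneg (fun i _ => Complex.normSq_nonneg _)
    exact mul_le_mul_of_nonneg_right (Nat.cast_le.mpr (card_fixing_perms T)) hK
  -- per-T bound: for T ≠ univ
  have hbound : ∀ T : Finset (Fin n), T.card < n →
      (∑ π : Equiv.Perm (Fin n), Complex.normSq (c (π, T))) * (σ ^ 2) ^ (n - T.card)
        * (n : ℝ) ^ (n - T.card)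
      ≤ ((n - T.card).factorial : ℝ) * (P * ε ^ (2 * (n - T.card))) := by
    intro T hTn
    have hn0 : 0 < n := lt_of_le_of_lt (Nat.zero_le _) hTn
    set m : ℕ := n - T.card with hmdef
    have hq : (0 : ℝ) ≤ (σ ^ 2) ^ m := by positivity
    have hnm : (0 : ℝ) ≤ (n : ℝ) ^ m := by positivity
    -- lower bound on each |b i|^2
    have hb2 : ∀ i, (ε⁻¹ * σ) ^ 2 * (n : ℝ) ≤ Complex.normSq (b i) := by
      intro i
      have h1 : (0 : ℝ) ≤ ε⁻¹ * σ * Real.sqrt n := by positivity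
      have h2 := pow_le_pow_left₀ h1 (hb i) 2
      rw [mul_pow, Real.sq_sqrt (Nat.cast_nonneg n)] at h2
      rw [← Complex.sq_norm]
      exact h2
    set r : ℝ := (ε⁻¹ * σ) ^ 2 * (n : ℝ) with hrdef
    have hr0 : 0 ≤ r := by positivity
    have hprodT : (0 : ℝ) ≤ ∏ i ∈ T, Complex.normSq (b i) :=
      Finset.prod_nonneg (fun i _ => Complex.normSq_nonneg _)
    have hcompl : r ^ m ≤ ∏ i ∈ Tᶜ, Complex.normSq (b i) := by
      have h1 : ∏ i ∈ Tᶜ, r ≤ ∏ i ∈ Tᶜ, Complex.normSq (b i) :=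
        Finset.prod_le_prod (fun i _ => hr0) (fun i _ => hb2 i)
      rwa [Finset.prod_const, Finset.card_compl, Fintype.card_fin] at h1
    have hTP : (∏ i ∈ T, Complex.normSq (b i)) * r ^ m ≤ P := by
      calc (∏ i ∈ T, Complex.normSq (b i)) * r ^ m
          ≤ (∏ i ∈ T, Complex.normSq (b i)) * ∏ i ∈ Tᶜ, Complex.normSq (b i) :=
            mul_le_mul_of_nonneg_left hcompl hprodT
        _ = P := by rw [hPdef, Finset.prod_mul_prod_compl]
    have hre2 : r * ε ^ 2 = σ ^ 2 * (n : ℝ) := by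
      rw [hrdef]
      field_simp
    have hmain : (∏ i ∈ T, Complex.normSq (b i)) * ((σ ^ 2) ^ m * (n : ℝ) ^ m)
        ≤ P * ε ^ (2 * m) := by
      have h1 : (∏ i ∈ T, Complex.normSq (b i)) * r ^ m * ε ^ (2 * m)
          ≤ P * ε ^ (2 * m) :=
        mul_le_mul_of_nonneg_right hTP (by positivity)
      calc (∏ i ∈ T, Complex.normSq (b i)) * ((σ ^ 2) ^ m * (n : ℝ) ^ m)
          = (∏ i ∈ T, Complex.normSq (b i)) * ((σ ^ 2 * (n : ℝ)) ^ m) := by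
            rw [mul_pow]
        _ = (∏ i ∈ T, Complex.normSq (b i)) * ((r * ε ^ 2) ^ m) := by rw [hre2]
        _ = (∏ i ∈ T, Complex.normSq (b i)) * r ^ m * ε ^ (2 * m) := by
            rw [mul_pow, pow_mul]
            ring
        _ ≤ P * ε ^ (2 * m) := h1
    calc (∑ π : Equiv.Perm (Fin n), Complex.normSq (c (π, T))) * (σ ^ 2) ^ m * (n : ℝ) ^ m
        ≤ (((n - T.card).factorial : ℝ) * ∏ i ∈ T, Complex.normSq (b i))
            * (σ ^ 2) ^ m * (n : ℝ) ^ m := by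
          apply mul_le_mul_of_nonneg_right (mul_le_mul_of_nonneg_right (hπsum T) hq) hnm
      _ = ((n - T.card).factorial : ℝ)
            * ((∏ i ∈ T, Complex.normSq (b i)) * ((σ ^ 2) ^ m * (n : ℝ) ^ m)) := by ring
      _ ≤ ((n - T.card).factorial : ℝ) * (P * ε ^ (2 * m)) :=
          mul_le_mul_of_nonneg_left hmain (Nat.cast_nonneg _)
  -- decompose the T-sum by cardinality
  have hTdecomp : Finset.univ.filter (fun T : Finset (Fin n) => T ≠ Finset.univ)
      = (Finset.range n).biUnion (fun k => Finset.powersetCard k Finset.univ) := by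
    ext T
    simp only [Finset.mem_filter, Finset.mem_univ, true_and, Finset.mem_biUnion,
      Finset.mem_range, Finset.mem_powersetCard_univ]
    constructor
    · intro hT
      refine ⟨T.card, ?_, rfl⟩
      have hle : T.card ≤ n := by
        have := Finset.card_le_univ T
        rwa [Fintype.card_fin] at this
      rcases lt_or_eq_of_le hle with h | h
      · exact h
      · exact absurd ((Finset.card_eq_iff_eq_univ T).mp (by rw [h, Fintype.card_fin])) hT
    · rintro ⟨k, hkn, hck⟩
      intro hTu
      rw [hTu, Finset.card_univ, Fintype.card_fin] at hck
      omega
  have hdisj : (↑(Finset.range n) : Set ℕ).PairwiseDisjoint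
      (fun k => Finset.powersetCard k (Finset.univ : Finset (Fin n))) := by
    intro a _ b _ hab
    apply Finset.disjoint_left.mpr
    intro T hTa hTb
    exact hab (by rw [← Finset.mem_powersetCard_univ.mp hTa, ← Finset.mem_powersetCard_univ.mp hTb])
  rw [hTdecomp, Finset.sum_biUnion hdisj]
  -- bound each cell
  have hcell : ∀ k ∈ Finset.range n,
      ∑ T ∈ Finset.powersetCard k (Finset.univ : Finset (Fin n)),
        (∑ π : Equiv.Perm (Fin n), Complex.normSq (c (π, T))) * (σ ^ 2) ^ (n - T.card)
      ≤ P * ε ^ (2 * (n - k)) := by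
    intro k hk
    have hkn : k < n := Finset.mem_range.mp hk
    have hn0 : 0 < n := lt_of_le_of_lt (Nat.zero_le _) hkn
    have hnpow : (0 : ℝ) < (n : ℝ) ^ (n - k) := by positivity
    rw [← mul_le_mul_iff_left₀ hnpow]
    have hstep : ∀ T ∈ Finset.powersetCard k (Finset.univ : Finset (Fin n)),
        (∑ π : Equiv.Perm (Fin n), Complex.normSq (c (π, T))) * (σ ^ 2) ^ (n - T.card)
        ≤ ((n - k).factorial : ℝ) * (P * ε ^ (2 * (n - k))) / (n : ℝ) ^ (n - k) := by
      intro T hT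
      have hck : T.card = k := Finset.mem_powersetCard_univ.mp hT
      have h1 := hbound T (hck ▸ hkn)
      rw [hck] at h1
      rw [hck, le_div_iff₀ hnpow]
      exact h1
    calc (∑ T ∈ Finset.powersetCard k (Finset.univ : Finset (Fin n)),
          (∑ π : Equiv.Perm (Fin n), Complex.normSq (c (π, T))) * (σ ^ 2) ^ (n - T.card))
          * (n : ℝ) ^ (n - k)
        ≤ ((Finset.powersetCard k (Finset.univ : Finset (Fin n))).card
            • (((n - k).factorial : ℝ) * (P * ε ^ (2 * (n - k))) / (n : ℝ) ^ (n - k)))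
          * (n : ℝ) ^ (n - k) := by
          apply mul_le_mul_of_nonneg_right (Finset.sum_le_card_nsmul _ _ _ hstep) (le_of_lt hnpow)
      _ = ((n.choose k : ℝ) * ((n - k).factorial : ℝ)) * (P * ε ^ (2 * (n - k))) := by
          have hcard : (Finset.powersetCard k (Finset.univ : Finset (Fin n))).card = n.choose k := by
            simp [Finset.card_powersetCard]
          rw [hcard, nsmul_eq_mul]
          field_simp
      _ ≤ ((n : ℝ) ^ (n - k)) * (P * ε ^ (2 * (n - k))) := by
          have hnat : n.choose k * (n - k).factorial ≤ n ^ (n - k) := by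
            have h1 : (n - k).factorial * n.choose (n - k) = n.descFactorial (n - k) :=
              (Nat.descFactorial_eq_factorial_mul_choose n (n - k)).symm
            have h2 : n.choose (n - k) = n.choose k := Nat.choose_symm (le_of_lt hkn)
            calc n.choose k * (n - k).factorial = n.descFactorial (n - k) := by
                  rw [← h1, h2]; ring
              _ ≤ n ^ (n - k) := Nat.descFactorial_le_pow n (n - k)
          have hPe : (0 : ℝ) ≤ P * ε ^ (2 * (n - k)) := by
            have : (0 : ℝ) ≤ P := Finset.prod_nonneg (fun i _ => Complex.normSq_nonneg _)
            positivity
          apply mul_le_mul_of_nonneg_right _ hPe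
          calc ((n.choose k : ℝ) * ((n - k).factorial : ℝ))
              = ((n.choose k * (n - k).factorial : ℕ) : ℝ) := by push_cast; ring
            _ ≤ (((n : ℕ) ^ (n - k) : ℕ) : ℝ) := Nat.cast_le.mpr hnat
            _ = ((n : ℝ) ^ (n - k)) := by push_cast; ring
      _ = (P * ε ^ (2 * (n - k))) * (n : ℝ) ^ (n - k) := by ring
  have hP0 : (0 : ℝ) ≤ P := Finset.prod_nonneg (fun i _ => Complex.normSq_nonneg _)
  calc ∑ k ∈ Finset.range n, ∑ T ∈ Finset.powersetCard k (Finset.univ : Finset (Fin n)),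
        (∑ π : Equiv.Perm (Fin n), Complex.normSq (c (π, T))) * (σ ^ 2) ^ (n - T.card)
      ≤ ∑ k ∈ Finset.range n, P * ε ^ (2 * (n - k)) := Finset.sum_le_sum hcell
    _ = P * ∑ k ∈ Finset.range n, ε ^ (2 * (n - k)) := by rw [Finset.mul_sum]
    _ ≤ P * (ε ^ 2 / (1 - ε ^ 2)) := mul_le_mul_of_nonneg_left (geom_tail_bound hε hε1 n) hP0
    _ = ε ^ 2 / (1 - ε ^ 2) * ‖(Matrix.diagonal b).det‖ ^ 2 := by
        rw [hRHS]; ring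
end

section
/- Let J_N(z) be the N×N Jordan block with diagonal z and superdiagonal 1. Set 𝔉^{-1} = min{|1−|z||, N^{-1}, |1−|z|^{-1}|}/2. There is a constant C(z) > 1 depending only on z such that for all N: σ_{N−1}(J_N(z)) ≥ 𝔉^{-1}, σ_N(J_N(z)) ≥ 𝔉^{-1}(|z| ∧ 1)^N / C(z), and σ_N(J_N(z)) ≤ C(z)(|z| ∧ 1)^N. -/
open Matrix

namespace Stmt8Aux
open Finset

open Finset

/-- Lemma A: quadratic form lower bound for the Jordan block on vectors with first coord 0. -/
lemma lemA (z : ℂ) (N : ℕ) (w : ℕ → ℂ) (h0 : w 0 = 0) (hN : w N = 0) :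
    (1 - ‖z‖) ^ 2 * ∑ p ∈ range N, Complex.normSq (w p)
      ≤ ∑ p ∈ range N, Complex.normSq (z * w p + w (p + 1)) := by
  set t := ‖z‖ with ht
  have ht0 : 0 ≤ t := norm_nonneg z
  set b : ℕ → ℝ := fun n => ‖w n‖ with hb
  have hb0 : ∀ n, 0 ≤ b n := fun n => norm_nonneg _
  -- pointwise bound
  have hpt : ∀ p, (1 - t) * b (p + 1) ^ 2 + (t ^ 2 - t) * b p ^ 2
      ≤ Complex.normSq (z * w p + w (p + 1)) := by
    intro p
    have h1 : b (p + 1) - t * b p ≤ ‖z * w p + w (p + 1)‖ := by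
      have := norm_add_le (z * w p + w (p+1)) (-(z * w p))
      simp only [add_neg_cancel_right, norm_neg, norm_mul] at this
      simpa [hb] using this
    have h2 : t * b p - b (p + 1) ≤ ‖z * w p + w (p + 1)‖ := by
      have := norm_add_le (z * w p + w (p+1)) (-(w (p+1)))
      simp only [add_neg_cancel_right, norm_neg, norm_mul] at this
      simpa [hb] using this
    have h3 : 0 ≤ ‖z * w p + w (p + 1)‖ := norm_nonneg _
    have h4 : Complex.normSq (z * w p + w (p + 1))
        = ‖z * w p + w (p + 1)‖ ^ 2 := (Complex.sq_norm _).symm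
    nlinarith [sq_nonneg (b p - b (p + 1)), hb0 p, hb0 (p+1), mul_nonneg ht0 (hb0 p)]
  have hsum := Finset.sum_le_sum (s := range N) (fun p _ => hpt p)
  have hshift : ∑ p ∈ range N, b (p + 1) ^ 2 = ∑ p ∈ range N, b p ^ 2 := by
    have h1 : ∑ p ∈ range (N + 1), b p ^ 2
        = (∑ p ∈ range N, b (p + 1) ^ 2) + b 0 ^ 2 := Finset.sum_range_succ' _ _
    have h2 : ∑ p ∈ range (N + 1), b p ^ 2
        = (∑ p ∈ range N, b p ^ 2) + b N ^ 2 := Finset.sum_range_succ _ _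
    have h0' : b 0 = 0 := by simp [hb, h0]
    have hN' : b N = 0 := by simp [hb, hN]
    rw [h0'] at h1
    rw [hN'] at h2
    simp at h1 h2
    linarith
  have hexp : ∑ p ∈ range N, ((1 - t) * b (p + 1) ^ 2 + (t ^ 2 - t) * b p ^ 2)
      = (1 - t) ^ 2 * ∑ p ∈ range N, b p ^ 2 := by
    rw [Finset.sum_add_distrib, ← Finset.mul_sum, ← Finset.mul_sum, hshift]
    ring
  have hns : ∀ p, Complex.normSq (w p) = b p ^ 2 := fun p => (Complex.sq_norm _).symm
  calc (1 - t) ^ 2 * ∑ p ∈ range N, Complex.normSq (w p)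
      = (1 - t) ^ 2 * ∑ p ∈ range N, b p ^ 2 := by simp_rw [hns]
    _ = ∑ p ∈ range N, ((1 - t) * b (p + 1) ^ 2 + (t ^ 2 - t) * b p ^ 2) := hexp.symm
    _ ≤ _ := hsum



/-- Lemma B: the Jordan quadratic form is bounded below (invertibility bound). -/
lemma lemB (z : ℂ) (hz : z ≠ 0) (N : ℕ) (w : ℕ → ℂ) (hN : w N = 0) :
    ∑ p ∈ range N, Complex.normSq (w p)
      ≤ (N : ℝ) ^ 2 * (max (‖z‖)⁻¹ ((‖z‖) ^ N)⁻¹) ^ 2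
        * ∑ p ∈ range N, Complex.normSq (z * w p + w (p + 1)) := by
  set t := ‖z‖ with htdef
  have ht : 0 < t := by simpa [htdef] using norm_pos_iff.mpr hz
  set u : ℕ → ℂ := fun p => z * w p + w (p + 1) with hu
  set T : ℝ := max t⁻¹ (t ^ N)⁻¹ with hT
  have hT0 : 0 < T := lt_max_of_lt_left (by positivity)
  -- induction: |w (N - d)| ≤ ∑_{j<d} t⁻¹^(j+1) * |u (N - d + j)|
  have key : ∀ d, d ≤ N → ‖w (N - d)‖
      ≤ ∑ j ∈ range d, t⁻¹ ^ (j + 1) * ‖u (N - d + j)‖ := by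
    intro d
    induction d with
    | zero => intro _; simp [hN]
    | succ d ih =>
      intro hd
      have hd' : d ≤ N := by omega
      have hstep : t * ‖w (N - (d+1))‖
          ≤ ‖u (N - (d+1))‖ + ‖w (N - (d+1) + 1)‖ := by
        have : z * w (N - (d+1)) = u (N - (d+1)) - w (N - (d+1) + 1) := by
          simp [hu]
        calc t * ‖w (N - (d+1))‖ = ‖z * w (N - (d+1))‖ := by
              rw [norm_mul]
          _ = ‖u (N - (d+1)) - w (N - (d+1) + 1)‖ := by rw [this]
          _ ≤ _ := by
              simpa [sub_eq_add_neg] using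
                norm_add_le (u (N - (d+1))) (-(w (N - (d+1) + 1)))
      have hidx : N - (d+1) + 1 = N - d := by omega
      rw [hidx] at hstep
      have hih := ih hd'
      -- target sum: reindex
      have htar : ∑ j ∈ range (d+1), t⁻¹ ^ (j + 1) * ‖u (N - (d+1) + j)‖
          = t⁻¹ * ‖u (N - (d+1))‖
            + t⁻¹ * ∑ j ∈ range d, t⁻¹ ^ (j + 1) * ‖u (N - d + j)‖ := by
        rw [Finset.sum_range_succ' (fun j => t⁻¹ ^ (j + 1) * ‖u (N - (d+1) + j)‖) d,
          Finset.mul_sum, add_comm]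
        congr 1
        · simp
        · apply Finset.sum_congr rfl
          intro j _
          have hidx2 : N - (d+1) + (j+1) = N - d + j := by omega
          rw [hidx2]
          ring
      rw [htar]
      have h1 : ‖w (N - (d+1))‖
          ≤ t⁻¹ * (‖u (N - (d+1))‖ + ‖w (N - d)‖) := by
        rw [le_inv_mul_iff₀ ht]
        linarith [hstep]
      calc ‖w (N - (d+1))‖
          ≤ t⁻¹ * (‖u (N - (d+1))‖ + ‖w (N - d)‖) := h1
        _ ≤ t⁻¹ * (‖u (N - (d+1))‖
              + ∑ j ∈ range d, t⁻¹ ^ (j + 1) * ‖u (N - d + j)‖) := by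
            apply mul_le_mul_of_nonneg_left _ (by positivity)
            linarith [hih]
        _ = _ := by ring
  -- per-index bound: |w p| ≤ T * ∑_{k<N} |u k|
  have hTpow : ∀ j, 1 ≤ j → j ≤ N → t⁻¹ ^ j ≤ T := by
    intro j hj1 hjN
    rcases le_total t 1 with h | h
    · have h1 : (1:ℝ) ≤ t⁻¹ := (one_le_inv₀ ht).mpr h
      calc t⁻¹ ^ j ≤ t⁻¹ ^ N := pow_le_pow_right₀ h1 hjN
        _ = (t ^ N)⁻¹ := by rw [inv_pow]
        _ ≤ T := le_max_right _ _
    · have h1 : t⁻¹ ≤ 1 := inv_le_one_of_one_le₀ h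
      have h0 : 0 ≤ t⁻¹ := by positivity
      calc t⁻¹ ^ j ≤ t⁻¹ ^ 1 := pow_le_pow_of_le_one h0 h1 hj1
        _ = t⁻¹ := pow_one _
        _ ≤ T := le_max_left _ _
  have habs : ∀ p ∈ range N, ‖w p‖ ≤ T * ∑ k ∈ range N, ‖u k‖ := by
    intro p hp
    rw [mem_range] at hp
    have hd : N - (N - p) = p := by omega
    have := key (N - p) (by omega)
    rw [hd] at this
    refine this.trans ?_
    calc ∑ j ∈ range (N - p), t⁻¹ ^ (j + 1) * ‖u (p + j)‖
        ≤ ∑ j ∈ range (N - p), T * ‖u (p + j)‖ := by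
          apply Finset.sum_le_sum
          intro j hj
          rw [mem_range] at hj
          exact mul_le_mul_of_nonneg_right (hTpow (j+1) (by omega) (by omega))
            (norm_nonneg _)
      _ = T * ∑ j ∈ range (N - p), ‖u (p + j)‖ := by rw [Finset.mul_sum]
      _ ≤ T * ∑ k ∈ range N, ‖u k‖ := by
          apply mul_le_mul_of_nonneg_left _ (le_of_lt hT0)
          rw [← Finset.sum_Ico_eq_sum_range (fun k => ‖u k‖) p N]
          apply Finset.sum_le_sum_of_subset_of_nonneg
          · intro k hk
            rw [Finset.mem_Ico] at hk
            rw [mem_range]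
            omega
          · intro k _ _
            exact norm_nonneg _
  -- Cauchy-Schwarz
  have hCS : (∑ k ∈ range N, ‖u k‖) ^ 2
      ≤ (N : ℝ) * ∑ k ∈ range N, Complex.normSq (u k) := by
    have := sq_sum_le_card_mul_sum_sq (s := range N) (f := fun k => ‖u k‖)
    simpa [Complex.sq_norm] using this
  have hfin : ∀ p ∈ range N, Complex.normSq (w p)
      ≤ T ^ 2 * ((N:ℝ) * ∑ k ∈ range N, Complex.normSq (u k)) := by
    intro p hp
    have h1 := habs p hp
    have h2 : Complex.normSq (w p) = ‖w p‖ ^ 2 := (Complex.sq_norm _).symm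
    have h3 : (0:ℝ) ≤ ‖w p‖ := norm_nonneg _
    have h4 : ‖w p‖ ^ 2 ≤ (T * ∑ k ∈ range N, ‖u k‖) ^ 2 := by
      apply sq_le_sq' _ h1
      have : 0 ≤ T * ∑ k ∈ range N, ‖u k‖ := by
        apply mul_nonneg (le_of_lt hT0)
        exact Finset.sum_nonneg fun k _ => norm_nonneg _
      linarith
    rw [h2]
    calc ‖w p‖ ^ 2 ≤ (T * ∑ k ∈ range N, ‖u k‖) ^ 2 := h4
      _ = T ^ 2 * (∑ k ∈ range N, ‖u k‖) ^ 2 := by ring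
      _ ≤ T ^ 2 * ((N:ℝ) * ∑ k ∈ range N, Complex.normSq (u k)) := by
          exact mul_le_mul_of_nonneg_left hCS (by positivity)
  calc ∑ p ∈ range N, Complex.normSq (w p)
      ≤ ∑ _p ∈ range N, T ^ 2 * ((N:ℝ) * ∑ k ∈ range N, Complex.normSq (u k)) :=
        Finset.sum_le_sum hfin
    _ = (N:ℝ) ^ 2 * T ^ 2 * ∑ k ∈ range N, Complex.normSq (u k) := by
        rw [Finset.sum_const, card_range]
        ring
    _ = _ := by rw [hT]



variable {N : ℕ}

/-- dot of star with self is the (real) sum of normSq. -/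
lemma star_dot_self (v : Fin N → ℂ) :
    star v ⬝ᵥ v = ((∑ p : Fin N, Complex.normSq (v p) : ℝ) : ℂ) := by
  push_cast
  simp only [dotProduct, Pi.star_apply, RCLike.star_def]
  exact Finset.sum_congr rfl fun p _ => by
    rw [Complex.normSq_eq_conj_mul_self]

/-- quadratic form of `Aᴴ * A`. -/
lemma qform (A : Matrix (Fin N) (Fin N) ℂ) (v : Fin N → ℂ) :
    star v ⬝ᵥ (Aᴴ * A) *ᵥ v = ((∑ p : Fin N, Complex.normSq ((A *ᵥ v) p) : ℝ) : ℂ) := by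
  rw [← mulVec_mulVec, dotProduct_mulVec, ← star_mulVec, ← star_dot_self]

/-- eigenvalue of `Aᴴ A` as the norm sq of `A` applied to unit eigenvector. -/
lemma eig_eq (A : Matrix (Fin N) (Fin N) ℂ) (i : Fin N) :
    (isHermitian_conjTranspose_mul_self A).eigenvalues i
      = ∑ p : Fin N, Complex.normSq ((A *ᵥ ⇑((isHermitian_conjTranspose_mul_self A).eigenvectorBasis i)) p) := by
  have h := (isHermitian_conjTranspose_mul_self A).eigenvalues_eq i
  rw [h, qform]
  simp

/-- the eigenbasis vectors have unit norm-sq sum, and are orthogonal. -/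
lemma eigbasis_dot (A : Matrix (Fin N) (Fin N) ℂ) (i j : Fin N) :
    star ⇑((isHermitian_conjTranspose_mul_self A).eigenvectorBasis i)
      ⬝ᵥ ⇑((isHermitian_conjTranspose_mul_self A).eigenvectorBasis j)
      = if i = j then 1 else 0 := by
  have h := orthonormal_iff_ite.mp ((isHermitian_conjTranspose_mul_self A).eigenvectorBasis).orthonormal i j
  rw [EuclideanSpace.inner_eq_star_dotProduct] at h
  rw [dotProduct_comm]
  simpa using h

/-- minimum-eigenvalue Rayleigh bound. -/
lemma rayleigh_min (A : Matrix (Fin N) (Fin N) ℂ) (i0 : Fin N)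
    (hmin : ∀ i, (isHermitian_conjTranspose_mul_self A).eigenvalues i0
      ≤ (isHermitian_conjTranspose_mul_self A).eigenvalues i) (v : Fin N → ℂ) :
    (isHermitian_conjTranspose_mul_self A).eigenvalues i0 * ∑ p : Fin N, Complex.normSq (v p)
      ≤ ∑ p : Fin N, Complex.normSq ((A *ᵥ v) p) := by
  set hH := isHermitian_conjTranspose_mul_self A
  set lam := hH.eigenvalues with hlam
  set U : Matrix (Fin N) (Fin N) ℂ := ↑hH.eigenvectorUnitary with hU
  have hUmem := hH.eigenvectorUnitary.2
  have hU1 : U * star U = 1 := (Matrix.mem_unitaryGroup_iff).mp hUmem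
  set y : Fin N → ℂ := (star U) *ᵥ v with hy
  have hsv : star y = star v ᵥ* U := by
    rw [hy, star_mulVec, star_eq_conjTranspose, conjTranspose_conjTranspose]
  -- quadratic form in terms of y
  have hq : star v ⬝ᵥ (Aᴴ * A) *ᵥ v = ∑ i : Fin N, ((lam i : ℂ) * (Complex.normSq (y i) : ℂ)) := by
    conv_lhs => rw [hH.spectral_theorem, Unitary.conjStarAlgAut_apply]
    rw [mul_assoc, ← mulVec_mulVec, dotProduct_mulVec, ← hsv, ← mulVec_mulVec, ← hy]
    simp only [dotProduct, mulVec_diagonal]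
    refine Finset.sum_congr rfl fun i _ => ?_
    have h2 : (starRingEnd ℂ) (y i) * y i = (Complex.normSq (y i) : ℂ) :=
      Complex.normSq_eq_conj_mul_self.symm
    simp only [Pi.star_apply, RCLike.star_def, Function.comp_apply]
    have h3 : ((RCLike.ofReal (lam i) : ℂ)) = ((lam i : ℝ) : ℂ) := rfl
    rw [h3]
    linear_combination ((lam i : ℝ) : ℂ) * h2
  -- norm preservation
  have hnorm : ∑ p : Fin N, Complex.normSq (y p) = ∑ p : Fin N, Complex.normSq (v p) := by
    have h1 : star y ⬝ᵥ y = star v ⬝ᵥ v := by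
      rw [hsv, hy, dotProduct_mulVec, vecMul_vecMul, hU1, vecMul_one]
    rw [star_dot_self, star_dot_self] at h1
    exact_mod_cast h1
  -- combine
  have hq2 : ((∑ p : Fin N, Complex.normSq ((A *ᵥ v) p) : ℝ) : ℂ)
      = ((∑ i : Fin N, lam i * Complex.normSq (y i) : ℝ) : ℂ) := by
    rw [← qform]
    rw [hq]
    push_cast
    rfl
  have hq3 : (∑ p : Fin N, Complex.normSq ((A *ᵥ v) p) : ℝ)
      = ∑ i : Fin N, lam i * Complex.normSq (y i) := by exact_mod_cast hq2
  rw [hq3, ← hnorm, Finset.mul_sum]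
  apply Finset.sum_le_sum
  intro i _
  exact mul_le_mul_of_nonneg_right (hmin i) (Complex.normSq_nonneg _)




/-- extension of a `Fin N` vector to `ℕ` by zero. -/
noncomputable def extv (N : ℕ) (v : Fin N → ℂ) : ℕ → ℂ :=
  fun n => if h : n < N then v ⟨n, h⟩ else 0

lemma ext_apply {N : ℕ} (v : Fin N → ℂ) (p : Fin N) : extv N v p = v p := by
  simp [extv, p.isLt]

lemma ext_ge {N : ℕ} (v : Fin N → ℂ) {n : ℕ} (h : N ≤ n) : extv N v n = 0 := by
  simp [extv, Nat.not_lt.mpr h]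

lemma sum_normSq_ext {N : ℕ} (v : Fin N → ℂ) :
    ∑ p : Fin N, Complex.normSq (v p) = ∑ p ∈ range N, Complex.normSq (extv N v p) := by
  rw [← Fin.sum_univ_eq_sum_range (fun n => Complex.normSq (extv N v n)) N]
  exact Finset.sum_congr rfl fun p _ => by rw [ext_apply]

lemma jordan_mulVec {N : ℕ} (z : ℂ) (v : Fin N → ℂ) (p : Fin N) :
    ((Matrix.of fun p q : Fin N =>
        if p = q then z else if q.val = p.val + 1 then (1:ℂ) else 0) *ᵥ v) p
      = z * extv N v p + extv N v (p.val + 1) := by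
  rw [ext_apply]
  show (∑ q : Fin N, (if p = q then z else if q.val = p.val + 1 then (1:ℂ) else 0) * v q) = _
  by_cases h : p.val + 1 < N
  · have heq : ∀ q : Fin N, (if p = q then z else if q.val = p.val + 1 then (1:ℂ) else 0) * v q
        = (if q = p then z * v q else 0) + (if q = ⟨p.val + 1, h⟩ then v q else 0) := by
      intro q
      rcases eq_or_ne q p with rfl | hqp
      · simp [Fin.ext_iff]
      · rcases eq_or_ne q ⟨p.val + 1, h⟩ with rfl | hq1
        · simp [hqp, (Ne.symm hqp), Fin.ext_iff]
        · have : ¬ (q.val = p.val + 1) := fun hc => hq1 (Fin.ext hc)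
          simp [hqp, Ne.symm hqp, this, hq1]
    rw [Finset.sum_congr rfl fun q _ => heq q, Finset.sum_add_distrib,
      Finset.sum_ite_eq' univ p fun q => z * v q,
      Finset.sum_ite_eq' univ (⟨p.val + 1, h⟩ : Fin N) v]
    simp [extv, h]
  · have heq : ∀ q : Fin N, (if p = q then z else if q.val = p.val + 1 then (1:ℂ) else 0) * v q
        = (if q = p then z * v q else 0) := by
      intro q
      rcases eq_or_ne q p with rfl | hqp
      · simp [Fin.ext_iff]
      · have : ¬ (q.val = p.val + 1) := fun hc => h (hc ▸ q.isLt)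
        simp [hqp, Ne.symm hqp, this]
    rw [Finset.sum_congr rfl fun q _ => heq q, Finset.sum_ite_eq' univ p fun q => z * v q]
    simp [extv, h]

lemma sum_normSq_jordan {N : ℕ} (z : ℂ) (v : Fin N → ℂ) :
    ∑ p : Fin N, Complex.normSq (((Matrix.of fun p q : Fin N =>
        if p = q then z else if q.val = p.val + 1 then (1:ℂ) else 0) *ᵥ v) p)
      = ∑ p ∈ range N, Complex.normSq (z * extv N v p + extv N v (p + 1)) := by
  rw [← Fin.sum_univ_eq_sum_range (fun n => Complex.normSq (z * extv N v n + extv N v (n + 1))) N]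
  exact Finset.sum_congr rfl fun p _ => by rw [jordan_mulVec, ext_apply]



lemma dot_combo {N : ℕ} (u u' : Fin N → ℂ) (huu : star u ⬝ᵥ u = 1)
    (hu'u' : star u' ⬝ᵥ u' = 1) (huu' : star u ⬝ᵥ u' = 0) (hu'u : star u' ⬝ᵥ u = 0)
    (a b c d : ℂ) :
    star (a • u + b • u') ⬝ᵥ (c • u + d • u')
      = starRingEnd ℂ a * c + starRingEnd ℂ b * d := by
  simp only [star_add, star_smul, add_dotProduct, dotProduct_add, smul_dotProduct,
    dotProduct_smul, huu, hu'u', huu', hu'u, smul_eq_mul, RCLike.star_def]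
  ring

lemma smul_real_smul {N : ℕ} (r : ℝ) (a : ℂ) (x : Fin N → ℂ) :
    a • (r • x) = ((r : ℂ) * a) • x := by
  ext p
  simp [Complex.real_smul]
  ring


/-- the second-smallest eigenvalue bound via vectors vanishing at the first coordinate. -/
lemma second_eig_ge {N : ℕ} (A : Matrix (Fin N) (Fin N) ℂ) (h0 : 0 < N) (h1 : 1 < N) (c : ℝ)
    (hq : ∀ v : Fin N → ℂ, v ⟨0, h0⟩ = 0 →
      c * ∑ p : Fin N, Complex.normSq (v p) ≤ ∑ p : Fin N, Complex.normSq ((A *ᵥ v) p)) :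
    c ≤ (isHermitian_conjTranspose_mul_self A).eigenvalues
      (Tuple.sort (isHermitian_conjTranspose_mul_self A).eigenvalues ⟨1, h1⟩) := by
  set hH := isHermitian_conjTranspose_mul_self A
  set lam := hH.eigenvalues with hlam
  set σs := Tuple.sort lam with hσ
  set i₀ := σs ⟨0, h0⟩
  set i₁ := σs ⟨1, h1⟩
  have hle : lam i₀ ≤ lam i₁ := by
    have := Tuple.monotone_sort lam (a := ⟨0, h0⟩) (b := ⟨1, h1⟩) (by simp [Fin.le_def])
    simpa using this
  have hne : i₀ ≠ i₁ := by
    intro h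
    have := σs.injective h
    simp [Fin.ext_iff] at this
  set u : Fin N → ℂ := ⇑(hH.eigenvectorBasis i₀) with hu
  set u' : Fin N → ℂ := ⇑(hH.eigenvectorBasis i₁) with hu'
  have huu : star u ⬝ᵥ u = 1 := by simpa using eigbasis_dot A i₀ i₀
  have hu'u' : star u' ⬝ᵥ u' = 1 := by simpa using eigbasis_dot A i₁ i₁
  have huu' : star u ⬝ᵥ u' = 0 := by simpa [hne] using eigbasis_dot A i₀ i₁
  have hu'u : star u' ⬝ᵥ u = 0 := by simpa [Ne.symm hne] using eigbasis_dot A i₁ i₀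
  have hsum_u : ∑ p : Fin N, Complex.normSq (u p) = 1 := by
    have := star_dot_self u
    rw [huu] at this
    exact_mod_cast this.symm
  have heig0 : lam i₀ = ∑ p : Fin N, Complex.normSq ((A *ᵥ u) p) := eig_eq A i₀
  have heig1 : lam i₁ = ∑ p : Fin N, Complex.normSq ((A *ᵥ u') p) := eig_eq A i₁
  by_cases hz0 : u ⟨0, h0⟩ = 0
  · have := hq u hz0
    rw [hsum_u, mul_one, ← heig0] at this
    linarith
  · -- v = a • u + b • u' with a = u' 0, b = -(u 0)
    set a : ℂ := u' ⟨0, h0⟩ with ha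
    set b : ℂ := -(u ⟨0, h0⟩) with hb
    set v : Fin N → ℂ := a • u + b • u' with hv
    have hv0 : v ⟨0, h0⟩ = 0 := by
      simp only [hv, Pi.add_apply, Pi.smul_apply, smul_eq_mul, ha, hb]
      ring
    clear_value a b v
    have hSv : ((∑ p : Fin N, Complex.normSq (v p) : ℝ) : ℂ)
        = ((Complex.normSq a + Complex.normSq b : ℝ) : ℂ) := by
      rw [← star_dot_self, hv, dot_combo u u' huu hu'u' huu' hu'u a b a b]
      push_cast
      rw [← Complex.normSq_eq_conj_mul_self, ← Complex.normSq_eq_conj_mul_self]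
    have hSv' : ∑ p : Fin N, Complex.normSq (v p) = Complex.normSq a + Complex.normSq b := by
      exact_mod_cast hSv
    have hHv : (Aᴴ * A) *ᵥ v = ((lam i₀ : ℂ) * a) • u + ((lam i₁ : ℂ) * b) • u' := by
      have e0 : (Aᴴ * A) *ᵥ u = lam i₀ • u := hH.mulVec_eigenvectorBasis i₀
      have e1 : (Aᴴ * A) *ᵥ u' = lam i₁ • u' := hH.mulVec_eigenvectorBasis i₁
      rw [hv, mulVec_add, mulVec_smul, mulVec_smul, e0, e1, smul_real_smul, smul_real_smul]
    have hSAv : ∑ p : Fin N, Complex.normSq ((A *ᵥ v) p)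
        = lam i₀ * Complex.normSq a + lam i₁ * Complex.normSq b := by
      have h1 : ((∑ p : Fin N, Complex.normSq ((A *ᵥ v) p) : ℝ) : ℂ)
          = star v ⬝ᵥ (Aᴴ * A) *ᵥ v := (qform A v).symm
      rw [hHv, hv, dot_combo u u' huu hu'u' huu' hu'u a b _ _] at h1
      have h2 : starRingEnd ℂ a * ((lam i₀ : ℂ) * a) + starRingEnd ℂ b * ((lam i₁ : ℂ) * b)
          = ((lam i₀ * Complex.normSq a + lam i₁ * Complex.normSq b : ℝ) : ℂ) := by
        have na : ((Complex.normSq a : ℝ) : ℂ) = starRingEnd ℂ a * a :=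
          Complex.normSq_eq_conj_mul_self
        have nb : ((Complex.normSq b : ℝ) : ℂ) = starRingEnd ℂ b * b :=
          Complex.normSq_eq_conj_mul_self
        push_cast
        linear_combination (-((lam i₀ : ℝ) : ℂ)) * na + (-((lam i₁ : ℝ) : ℂ)) * nb
      rw [h2] at h1
      rw [← hv] at h1
      exact_mod_cast h1
    have hb0 : 0 < Complex.normSq b := by
      rw [hb]
      simpa [Complex.normSq_pos] using hz0
    have hkey := hq v hv0
    rw [hSv', hSAv] at hkey
    have hfin : c * (Complex.normSq a + Complex.normSq b)
        ≤ lam i₁ * (Complex.normSq a + Complex.normSq b) := by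
      have : lam i₀ * Complex.normSq a ≤ lam i₁ * Complex.normSq a :=
        mul_le_mul_of_nonneg_right hle (Complex.normSq_nonneg _)
      calc c * (Complex.normSq a + Complex.normSq b)
          ≤ lam i₀ * Complex.normSq a + lam i₁ * Complex.normSq b := hkey
        _ ≤ lam i₁ * Complex.normSq a + lam i₁ * Complex.normSq b := by linarith
        _ = _ := by ring
    have hpos : 0 < Complex.normSq a + Complex.normSq b := by
      have := Complex.normSq_nonneg a
      linarith
    exact le_of_mul_le_mul_right (by linarith [hfin]) hpos


end Stmt8Aux

open Stmt8Aux

/-- The singular values of a square complex matrix, in increasing order: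
`svals A 0` is the smallest singular value, `svals A 1` the second smallest, etc. -/
noncomputable def svals {N : ℕ} (A : Matrix (Fin N) (Fin N) ℂ) : Fin N → ℝ :=
  fun k => Real.sqrt ((Matrix.isHermitian_conjTranspose_mul_self A).eigenvalues
    (Tuple.sort (Matrix.isHermitian_conjTranspose_mul_self A).eigenvalues k))

/-- for the Jordan block `J_N(z)` with diagonal `z` and superdiagonal `1`,
setting `𝔉⁻¹ = min{|1−|z||, N⁻¹, |1−|z|⁻¹|}/2`, there is a constant `C(z) > 1` such
that for all `N`: `σ_{N−1}(J_N(z)) ≥ 𝔉⁻¹`,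
`σ_N(J_N(z)) ≥ 𝔉⁻¹ (|z| ∧ 1)^N / C(z)` and `σ_N(J_N(z)) ≤ C(z)(|z| ∧ 1)^N`. -/
theorem stmt8 (z : ℂ) :
    ∃ C : ℝ, 1 < C ∧ ∀ N : ℕ, ∀ hN : 2 ≤ N,
      let JN : Matrix (Fin N) (Fin N) ℂ :=
        Matrix.of fun p q : Fin N => if p = q then z else if q.val = p.val + 1 then 1 else 0
      let Finv : ℝ :=
        min (min |1 - ‖z‖| ((N : ℝ)⁻¹)) |1 - (‖z‖)⁻¹| / 2
      Finv ≤ svals JN ⟨1, by omega⟩ ∧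
      Finv * (min (‖z‖) 1) ^ N / C ≤ svals JN ⟨0, by omega⟩ ∧
      svals JN ⟨0, by omega⟩ ≤ C * (min (‖z‖) 1) ^ N := by
  have habs : 0 ≤ ‖z‖ := norm_nonneg z
  refine ⟨‖z‖ + 2, by linarith, ?_⟩
  intro N hN JN Finv
  set t := ‖z‖ with htdef
  have hN0 : 0 < N := by omega
  have hN1 : 1 < N := by omega
  have hNR : (0:ℝ) < N := by exact_mod_cast hN0
  set lam : Fin N → ℝ := (Matrix.isHermitian_conjTranspose_mul_self JN).eigenvalues with hlam
  set σs := Tuple.sort lam with hσs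
  have hFdef : Finv = min (min |1 - t| ((N:ℝ)⁻¹)) |1 - t⁻¹| / 2 := rfl
  have hF1 : Finv ≤ |1 - t| / 2 := by
    rw [hFdef]
    have h1 := min_le_left (min |1 - t| ((N:ℝ)⁻¹)) |1 - t⁻¹|
    have h2 := min_le_left |1 - t| ((N:ℝ)⁻¹)
    linarith
  have hF2 : Finv ≤ (N:ℝ)⁻¹ / 2 := by
    rw [hFdef]
    have h1 := min_le_left (min |1 - t| ((N:ℝ)⁻¹)) |1 - t⁻¹|
    have h2 := min_le_right |1 - t| ((N:ℝ)⁻¹)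
    linarith
  have hFnn : 0 ≤ Finv := by
    rw [hFdef]
    have h1 : (0:ℝ) ≤ |1 - t| := abs_nonneg _
    have h2 : (0:ℝ) ≤ (N:ℝ)⁻¹ := by positivity
    have h3 : (0:ℝ) ≤ |1 - t⁻¹| := abs_nonneg _
    have := le_min (le_min h1 h2) h3
    linarith
  have hmono := Tuple.monotone_sort lam
  have hmin : ∀ i, lam (σs ⟨0, hN0⟩) ≤ lam i := by
    intro i
    obtain ⟨j, hj⟩ := σs.surjective i
    have h0j : (⟨0, hN0⟩ : Fin N) ≤ j := by simp [Fin.le_def]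
    have h := hmono h0j
    rw [hσs] at hj ⊢
    simpa [Function.comp, hj] using h
  refine ⟨?_, ?_, ?_⟩
  · -- (a) second smallest singular value
    have key : (1 - t) ^ 2 ≤ lam (σs ⟨1, hN1⟩) := by
      apply second_eig_ge JN hN0 hN1
      intro v hv0
      have hw0 : extv N v 0 = 0 := by
        have h := ext_apply v ⟨0, hN0⟩
        rw [hv0] at h
        exact h
      calc (1 - t) ^ 2 * ∑ p : Fin N, Complex.normSq (v p)
          = (1 - t) ^ 2 * ∑ p ∈ Finset.range N, Complex.normSq (extv N v p) := by
            rw [sum_normSq_ext]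
        _ ≤ ∑ p ∈ Finset.range N, Complex.normSq (z * extv N v p + extv N v (p + 1)) :=
            lemA z N _ hw0 (ext_ge v le_rfl)
        _ = ∑ p : Fin N, Complex.normSq ((JN *ᵥ v) p) := (sum_normSq_jordan z v).symm
    have final : Finv ≤ Real.sqrt (lam (σs ⟨1, hN1⟩)) := by
      calc Finv ≤ |1 - t| / 2 := hF1
        _ ≤ |1 - t| := by linarith [abs_nonneg (1 - t)]
        _ = Real.sqrt ((1 - t) ^ 2) := (Real.sqrt_sq_eq_abs _).symm
        _ ≤ _ := Real.sqrt_le_sqrt key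
    exact final
  · -- (b) lower bound on smallest singular value
    rcases eq_or_ne z 0 with rfl | hz
    · have hz0 : Finv * (min t 1) ^ N / (t + 2) = 0 := by
        have ht0 : t = 0 := by simp [htdef]
        rw [ht0]
        simp [zero_pow (show N ≠ 0 by omega)]
      rw [hz0]
      exact Real.sqrt_nonneg _
    · have ht : 0 < t := by rw [htdef]; exact norm_pos_iff.mpr hz
      set i₀ := σs ⟨0, hN0⟩ with hi₀
      set u : Fin N → ℂ := ⇑((Matrix.isHermitian_conjTranspose_mul_self JN).eigenvectorBasis i₀)
        with hu
      have huu : star u ⬝ᵥ u = 1 := by simpa using eigbasis_dot JN i₀ i₀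
      have hsum_u : ∑ p : Fin N, Complex.normSq (u p) = 1 := by
        have h := star_dot_self u
        rw [huu] at h
        exact_mod_cast h.symm
      have heig : lam i₀ = ∑ p : Fin N, Complex.normSq ((JN *ᵥ u) p) := eig_eq JN i₀
      set T : ℝ := max t⁻¹ (t ^ N)⁻¹ with hT
      have hTpos : 0 < T := lt_max_of_lt_left (by positivity)
      have hB := lemB z hz N (extv N u) (ext_ge u le_rfl)
      have e1 : ∑ p ∈ Finset.range N, Complex.normSq (extv N u p) = 1 := by
        rw [← sum_normSq_ext]; exact hsum_u
      have e2 : ∑ p ∈ Finset.range N, Complex.normSq (z * extv N u p + extv N u (p + 1))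
          = lam i₀ := by
        rw [← sum_normSq_jordan]; exact heig.symm
      rw [e1, e2, ← hT] at hB
      -- hB : 1 ≤ N^2 * T^2 * lam i₀
      have hsq : ((N:ℝ) * T)⁻¹ ≤ Real.sqrt (lam i₀) := by
        have hP : (0:ℝ) < (N:ℝ) ^ 2 * T ^ 2 := by positivity
        have hident : ((N:ℝ) * T)⁻¹ ^ 2 * ((N:ℝ) ^ 2 * T ^ 2) = 1 := by
          field_simp
        have h2 : ((N:ℝ) * T)⁻¹ ^ 2 ≤ lam i₀ := by nlinarith
        have h3 := Real.sqrt_le_sqrt h2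
        rwa [Real.sqrt_sq (by positivity)] at h3
      rcases le_or_gt 1 t with h1t | h1t
      · have hTle : T = t⁻¹ := by
          rw [hT]
          apply max_eq_left
          apply inv_anti₀ ht
          exact le_self_pow₀ h1t (by omega)
        have e3 : ((N:ℝ) * T)⁻¹ = t * (N:ℝ)⁻¹ := by
          rw [hTle]
          field_simp
        have hNi : (0:ℝ) ≤ (N:ℝ)⁻¹ := by positivity
        have hmin1 : min t 1 = 1 := min_eq_right h1t
        rw [hmin1, one_pow]
        calc Finv * 1 / (t + 2) ≤ Finv := by
              rw [mul_one]
              apply div_le_self hFnn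
              linarith
          _ ≤ (N:ℝ)⁻¹ / 2 := hF2
          _ ≤ (N:ℝ)⁻¹ := by linarith
          _ ≤ t * (N:ℝ)⁻¹ := le_mul_of_one_le_left hNi h1t
          _ = ((N:ℝ) * T)⁻¹ := e3.symm
          _ ≤ Real.sqrt (lam i₀) := hsq
      · have hTle : T = (t ^ N)⁻¹ := by
          rw [hT]
          apply max_eq_right
          apply inv_anti₀ (by positivity)
          calc t ^ N ≤ t ^ 1 := pow_le_pow_of_le_one ht.le h1t.le (by omega)
            _ = t := pow_one t
        have htN : (0:ℝ) < t ^ N := by positivity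
        have e3 : ((N:ℝ) * T)⁻¹ = t ^ N * (N:ℝ)⁻¹ := by
          rw [hTle]
          field_simp
        have hmin1 : min t 1 = t := min_eq_left h1t.le
        rw [hmin1]
        calc Finv * t ^ N / (t + 2) ≤ Finv * t ^ N := by
              apply div_le_self (by positivity)
              linarith
          _ ≤ ((N:ℝ)⁻¹ / 2) * t ^ N := by
              apply mul_le_mul_of_nonneg_right hF2 htN.le
          _ ≤ (N:ℝ)⁻¹ * t ^ N := by
              have : (0:ℝ) ≤ (N:ℝ)⁻¹ * t ^ N := by positivity
              nlinarith
          _ = ((N:ℝ) * T)⁻¹ := by rw [e3]; ring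
          _ ≤ Real.sqrt (lam i₀) := hsq
  · -- (c) upper bound on smallest singular value
    have hR0 : (0:ℝ) ≤ lam (σs ⟨0, hN0⟩) :=
      Matrix.eigenvalues_conjTranspose_mul_self_nonneg JN _
    rcases le_or_gt 1 t with h1t | h1t
    · -- test vector e_{N-1}
      set v : Fin N → ℂ := fun p => if p.val = N - 1 then 1 else 0 with hv
      have hw : ∀ n, extv N v n = if n = N - 1 then (1:ℂ) else 0 := by
        intro n
        by_cases h : n < N
        · simp only [extv, dif_pos h, hv]
        · have h2 : n ≠ N - 1 := by omega
          simp [extv, h, h2]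
      have hS : ∑ p : Fin N, Complex.normSq (v p) = 1 := by
        rw [sum_normSq_ext]
        have h1 : ∀ p ∈ Finset.range N, Complex.normSq (extv N v p)
            = if p = N - 1 then (1:ℝ) else 0 := by
          intro p _
          rw [hw]
          split <;> simp
        rw [Finset.sum_congr rfl h1, Finset.sum_ite_eq' (Finset.range N) (N-1)]
        rw [if_pos (Finset.mem_range.mpr (by omega))]
      have hAv : ∑ p : Fin N, Complex.normSq ((JN *ᵥ v) p) = t ^ 2 + 1 := by
        rw [sum_normSq_jordan]
        have hterm : ∀ p ∈ Finset.range N, Complex.normSq (z * extv N v p + extv N v (p + 1))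
            = (if p = N - 1 then t ^ 2 else 0) + (if p = N - 2 then (1:ℝ) else 0) := by
          intro p hp
          rw [Finset.mem_range] at hp
          rw [hw, hw]
          rcases eq_or_ne p (N - 1) with rfl | hp1
          · have h2 : ¬(N - 1 + 1 = N - 1) := by omega
            have h3 : ¬(N - 1 = N - 2) := by omega
            simp [h2, h3, Complex.normSq_eq_norm_sq, ← htdef]
          · rcases eq_or_ne p (N - 2) with rfl | hp2
            · have h4 : N - 2 + 1 = N - 1 := by omega
              have h5 : ¬(N - 2 = N - 1) := by omega
              simp [h4, h5]
            · have h6 : ¬(p + 1 = N - 1) := by omega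
              simp [hp1, hp2, h6]
        rw [Finset.sum_congr rfl hterm, Finset.sum_add_distrib,
          Finset.sum_ite_eq' (Finset.range N) (N-1), Finset.sum_ite_eq' (Finset.range N) (N-2),
          if_pos (Finset.mem_range.mpr (by omega)), if_pos (Finset.mem_range.mpr (by omega))]
      have hR := rayleigh_min JN (σs ⟨0, hN0⟩) hmin v
      rw [hS, mul_one, hAv] at hR
      have hfin : Real.sqrt (lam (σs ⟨0, hN0⟩)) ≤ t + 2 := by
        calc Real.sqrt (lam (σs ⟨0, hN0⟩)) ≤ Real.sqrt (t ^ 2 + 1) := Real.sqrt_le_sqrt hR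
          _ ≤ Real.sqrt ((t + 2) ^ 2) := Real.sqrt_le_sqrt (by nlinarith)
          _ = t + 2 := Real.sqrt_sq (by linarith)
      have he : (t + 2) * (min t 1) ^ N = t + 2 := by
        rw [min_eq_right h1t, one_pow, mul_one]
      rw [he]
      exact hfin
    · -- test vector (-z)^p
      set v : Fin N → ℂ := fun p => (-z) ^ (p.val) with hv
      have hw : ∀ n, n < N → extv N v n = (-z) ^ n := by
        intro n h
        simp only [extv, dif_pos h, hv]
      have hS1 : (1:ℝ) ≤ ∑ p : Fin N, Complex.normSq (v p) := by
        rw [sum_normSq_ext]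
        have h0mem : 0 ∈ Finset.range N := Finset.mem_range.mpr hN0
        have h := Finset.single_le_sum
          (f := fun p => Complex.normSq (extv N v p))
          (fun i _ => Complex.normSq_nonneg _) h0mem
        have h0v : Complex.normSq (extv N v 0) = 1 := by
          rw [hw 0 hN0]
          simp
        simpa [h0v] using h
      have hAv : ∑ p : Fin N, Complex.normSq ((JN *ᵥ v) p) = (t ^ N) ^ 2 := by
        rw [sum_normSq_jordan]
        rw [Finset.sum_eq_single (N - 1)]
        · rw [hw (N-1) (by omega), ext_ge v (by omega : N ≤ N - 1 + 1)]
          have hNN : N - 1 + 1 = N := by omega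
          calc Complex.normSq (z * (-z) ^ (N - 1) + 0)
              = Complex.normSq z * Complex.normSq z ^ (N - 1) := by
                rw [add_zero, Complex.normSq_mul, map_pow, Complex.normSq_neg]
            _ = (t ^ 2) * (t ^ 2) ^ (N - 1) := by rw [Complex.normSq_eq_norm_sq, ← htdef]
            _ = (t ^ 2) ^ (N - 1 + 1) := (pow_succ' _ _).symm
            _ = (t ^ 2) ^ N := by rw [hNN]
            _ = (t ^ N) ^ 2 := by rw [← pow_mul, ← pow_mul, Nat.mul_comm]
        · intro p hp hpne
          rw [Finset.mem_range] at hp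
          rw [hw p hp, hw (p + 1) (by omega)]
          have hzero : z * (-z) ^ p + (-z) ^ (p + 1) = 0 := by
            rw [pow_succ']
            ring
          rw [hzero]
          simp
        · intro h
          exact absurd (Finset.mem_range.mpr (by omega)) h
      have hR := rayleigh_min JN (σs ⟨0, hN0⟩) hmin v
      rw [hAv] at hR
      have hlamle : lam (σs ⟨0, hN0⟩) ≤ (t ^ N) ^ 2 := by nlinarith
      have hfin : Real.sqrt (lam (σs ⟨0, hN0⟩)) ≤ t ^ N := by
        calc Real.sqrt (lam (σs ⟨0, hN0⟩)) ≤ Real.sqrt ((t ^ N) ^ 2) := Real.sqrt_le_sqrt hlamle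
          _ = t ^ N := Real.sqrt_sq (by positivity)
      have he : (t + 2) * (min t 1) ^ N = (t + 2) * t ^ N := by
        rw [min_eq_left h1t.le]
      rw [he]
      calc Real.sqrt (lam (σs ⟨0, hN0⟩)) ≤ t ^ N := hfin
        _ ≤ (t + 2) * t ^ N := le_mul_of_one_le_left (by positivity) (by linarith)
end

section
/- For any two N×N complex matrices A and B, det(A+B) = Σ over pairs of subsets X,Y ⊆ [N] with |X| = |Y| of (−1)^{sgn(σ_X)sgn(σ_Y)} det(A[X̄,Ȳ]) det(B[X,Y]), where A[X,Y] denotes the submatrix with rows in X and columns in Y, X̄ = [N]∖X, and σ_Z is the permutation placing the elements of Z first (in order) followed by those of Z̄ (in order). -/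
open Matrix Classical

/-- The permutation of `Fin N` placing the elements of `X` first (in increasing order),
followed by the elements of `Xᶜ` (in increasing order). -/
noncomputable def shuffle {N : ℕ} (X : Finset (Fin N)) : Equiv.Perm (Fin N) :=
  ((finCongr (show X.card + (N - X.card) = N by
      have h := Finset.card_le_univ X
      simp only [Finset.card_univ, Fintype.card_fin] at h
      omega)).symm.trans
    ((finSumFinEquiv.symm).trans
      ((Equiv.sumCongr
          ((X.orderIsoOfFin rfl).toEquiv.trans
            (Equiv.subtypeEquivRight (fun x => by simp)))
          (((finCongr (show N - X.card = Xᶜ.card by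
              simp [Finset.card_compl, Fintype.card_fin])).trans
            (Xᶜ.orderIsoOfFin rfl).toEquiv).trans
            (Equiv.subtypeEquivRight (fun x => by simp)))).trans
        (Equiv.Set.sumCompl (X : Set (Fin N))))))

/-- The summand indexed by subsets `X, Y` in the expansion of `det(A+B)` over
complementary minors: `sign(σ_X) sign(σ_Y) det(A[X̄,Ȳ]) det(B[X,Y])` when
`|X| = |Y|`, and `0` otherwise. -/
noncomputable def minorTerm {N : ℕ} (A B : Matrix (Fin N) (Fin N) ℂ)
    (X Y : Finset (Fin N)) : ℂ :=
  if h : X.card = Y.card then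
    (((Equiv.Perm.sign (shuffle X) * Equiv.Perm.sign (shuffle Y) : ℤˣ) : ℤ) : ℂ)
      * (A.submatrix
          (fun a : Fin (Xᶜ.card) => ((Xᶜ.orderIsoOfFin rfl) a).val)
          (fun a : Fin (Xᶜ.card) => ((Yᶜ.orderIsoOfFin (show Yᶜ.card = Xᶜ.card by
              simp [Finset.card_compl, h])) a).val)).det
      * (B.submatrix
          (fun a : Fin X.card => ((X.orderIsoOfFin rfl) a).val)
          (fun a : Fin X.card => ((Y.orderIsoOfFin h.symm) a).val)).det
  else 0

section Aux
variable {N : ℕ}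

lemma card_le_N (X : Finset (Fin N)) : X.card ≤ N := by
  simpa using Finset.card_le_univ X

lemma shuffle_apply_lt (X : Finset (Fin N)) (i : Fin N) (j : Fin X.card)
    (hj : (j : ℕ) = (i : ℕ)) :
    shuffle X i = (X.orderIsoOfFin rfl j : Fin N) := by
  have hc : X.card + (N - X.card) = N := by
    have h := card_le_N X; omega
  have key : Fin.cast hc.symm i = Fin.castAdd (N - X.card) j := by
    ext; simp [hj]
  simp only [shuffle, Equiv.trans_apply, finCongr_symm_apply, key,
    finSumFinEquiv_symm_apply_castAdd, Equiv.sumCongr_apply, Sum.map_inl,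
    Function.comp_apply, Equiv.Set.sumCompl_apply_inl]
  rfl

lemma shuffle_apply_ge (X : Finset (Fin N)) (i : Fin N) (j : Fin Xᶜ.card)
    (hj : (j : ℕ) + X.card = (i : ℕ)) :
    shuffle X i = (Xᶜ.orderIsoOfFin rfl j : Fin N) := by
  have hc : X.card + (N - X.card) = N := by
    have h := card_le_N X; omega
  have hm : N - X.card = Xᶜ.card := by
    simp [Finset.card_compl, Fintype.card_fin]
  have key : Fin.cast hc.symm i = Fin.natAdd X.card (Fin.cast hm.symm j) := by
    ext; simp; omega
  simp only [shuffle, Equiv.trans_apply, finCongr_symm_apply, key,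
    finSumFinEquiv_symm_apply_natAdd, Equiv.sumCongr_apply, Sum.map_inr,
    Function.comp_apply, Equiv.Set.sumCompl_apply_inr, finCongr_apply, Fin.cast_cast,
    Fin.cast_eq_self]
  rfl

/-- the block permutation -/
noncomputable def Phi (X Y : Finset (Fin N))
    (pq : Equiv.Perm (Fin X.card) × Equiv.Perm (Fin Xᶜ.card)) : Equiv.Perm (Fin N) :=
  (shuffle X) * ((finSumFinEquiv.trans (finCongr
      (show X.card + Xᶜ.card = N by
        simpa using X.card_add_card_compl))).permCongr
      (pq.1.sumCongr pq.2)) * (shuffle Y)⁻¹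

lemma mid_apply_lt {k m : ℕ} (h : k + m = N) (p : Equiv.Perm (Fin k)) (q : Equiv.Perm (Fin m))
    (i : Fin N) (hi : (i : ℕ) < k) :
    ((finSumFinEquiv.trans (finCongr h)).permCongr (p.sumCongr q)) i
      = ⟨(p ⟨i, hi⟩ : Fin k), by have := (p ⟨i, hi⟩).isLt; omega⟩ := by
  have key : Fin.cast h.symm i = Fin.castAdd m ⟨i, hi⟩ := by ext; simp
  simp only [Equiv.permCongr_apply, Equiv.trans_apply, Equiv.symm_trans_apply,
    finCongr_symm_apply, key, finSumFinEquiv_symm_apply_castAdd,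
    Equiv.sumCongr_apply, Sum.map_inl, finSumFinEquiv_apply_left, finCongr_apply]
  ext; simp

lemma mid_apply_ge {k m : ℕ} (h : k + m = N) (p : Equiv.Perm (Fin k)) (q : Equiv.Perm (Fin m))
    (i : Fin N) (hi : k ≤ (i : ℕ)) :
    ((finSumFinEquiv.trans (finCongr h)).permCongr (p.sumCongr q)) i
      = ⟨k + (q ⟨(i : ℕ) - k, by have := i.isLt; omega⟩ : Fin m), by
          have := (q ⟨(i : ℕ) - k, by have := i.isLt; omega⟩).isLt; omega⟩ := by
  have key : Fin.cast h.symm i = Fin.natAdd k ⟨(i : ℕ) - k, by have := i.isLt; omega⟩ := by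
    ext; simp; omega
  simp only [Equiv.permCongr_apply, Equiv.trans_apply, Equiv.symm_trans_apply,
    finCongr_symm_apply, key, finSumFinEquiv_symm_apply_natAdd,
    Equiv.sumCongr_apply, Sum.map_inr, finSumFinEquiv_apply_right, finCongr_apply]
  ext; simp

lemma Phi_apply_Y (X Y : Finset (Fin N)) (h : X.card = Y.card)
    (pq : Equiv.Perm (Fin X.card) × Equiv.Perm (Fin Xᶜ.card)) (a : Fin Y.card) :
    Phi X Y pq (Y.orderIsoOfFin rfl a : Fin N)
      = (X.orderIsoOfFin rfl (pq.1 (Fin.cast h.symm a)) : Fin N) := by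
  have haN : (a : ℕ) < N := a.isLt.trans_le (card_le_N Y)
  have h1 : (shuffle Y)⁻¹ (Y.orderIsoOfFin rfl a : Fin N) = ⟨a, haN⟩ := by
    rw [show ((shuffle Y)⁻¹ : Equiv.Perm (Fin N)) = (shuffle Y).symm from rfl,
      Equiv.symm_apply_eq]
    exact (shuffle_apply_lt Y ⟨a, haN⟩ a rfl).symm
  have h2 := mid_apply_lt (show X.card + Xᶜ.card = N by simpa using X.card_add_card_compl)
      pq.1 pq.2 ⟨a, haN⟩ (by simpa [h] using a.isLt)
  simp only [Phi, Equiv.Perm.coe_mul, Function.comp_apply, h1, h2]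
  refine shuffle_apply_lt X _ _ ?_
  rfl

lemma Phi_apply_Yc (X Y : Finset (Fin N)) (h : X.card = Y.card)
    (pq : Equiv.Perm (Fin X.card) × Equiv.Perm (Fin Xᶜ.card)) (a : Fin Yᶜ.card) :
    Phi X Y pq (Yᶜ.orderIsoOfFin rfl a : Fin N)
      = (Xᶜ.orderIsoOfFin rfl (pq.2 (Fin.cast
          (show Yᶜ.card = Xᶜ.card by simp [Finset.card_compl, h]) a)) : Fin N) := by
  have hcY : Yᶜ.card = N - Y.card := by simp [Finset.card_compl]
  have haN : (a : ℕ) + Y.card < N := by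
    have := a.isLt; omega
  have h1 : (shuffle Y)⁻¹ (Yᶜ.orderIsoOfFin rfl a : Fin N) = ⟨a + Y.card, haN⟩ := by
    rw [show ((shuffle Y)⁻¹ : Equiv.Perm (Fin N)) = (shuffle Y).symm from rfl,
      Equiv.symm_apply_eq]
    exact (shuffle_apply_ge Y ⟨a + Y.card, haN⟩ a rfl).symm
  have h2 := mid_apply_ge (show X.card + Xᶜ.card = N by simpa using X.card_add_card_compl)
      pq.1 pq.2 ⟨a + Y.card, haN⟩ (by simp [h])
  simp only [Phi, Equiv.Perm.coe_mul, Function.comp_apply, h1, h2]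
  refine shuffle_apply_ge X _ _ ?_
  rw [add_comm]
  congr 3
  ext
  simp
  omega

lemma Phi_image (X Y : Finset (Fin N)) (h : X.card = Y.card)
    (pq : Equiv.Perm (Fin X.card) × Equiv.Perm (Fin Xᶜ.card)) :
    Y.image (Phi X Y pq) = X := by
  apply Finset.eq_of_subset_of_card_le
  · intro x hx
    obtain ⟨y, hy, rfl⟩ := Finset.mem_image.mp hx
    set a := (Y.orderIsoOfFin rfl).symm ⟨y, hy⟩ with ha
    have hya : y = (Y.orderIsoOfFin rfl a : Fin N) := by simp [ha]
    rw [hya, Phi_apply_Y X Y h]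
    exact ((X.orderIsoOfFin rfl) _).2
  · rw [Finset.card_image_of_injective _ (Equiv.injective _), h]

lemma Phi_sign (X Y : Finset (Fin N))
    (pq : Equiv.Perm (Fin X.card) × Equiv.Perm (Fin Xᶜ.card)) :
    Equiv.Perm.sign (Phi X Y pq)
      = Equiv.Perm.sign (shuffle X) * Equiv.Perm.sign (shuffle Y)
        * Equiv.Perm.sign pq.1 * Equiv.Perm.sign pq.2 := by
  simp only [Phi, _root_.map_mul, Equiv.Perm.sign_permCongr, Equiv.Perm.sign_sumCongr,
    Equiv.Perm.sign_inv]
  simp [mul_comm, mul_left_comm, mul_assoc]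

end Aux

section Aux2
variable {N : ℕ}

lemma sigma_mem_Xc {X Y : Finset (Fin N)} {σ : Equiv.Perm (Fin N)}
    (hσ : Y.image σ = X) {y : Fin N} (hy : y ∈ Yᶜ) : σ y ∈ Xᶜ := by
  rw [Finset.mem_compl] at hy ⊢
  intro hx
  rw [← hσ] at hx
  obtain ⟨y', hy', heq⟩ := Finset.mem_image.mp hx
  exact hy (σ.injective heq ▸ hy')

noncomputable def Psi (X Y : Finset (Fin N)) (h : X.card = Y.card) (σ : Equiv.Perm (Fin N))
    (hσ : Y.image σ = X) : Equiv.Perm (Fin X.card) × Equiv.Perm (Fin Xᶜ.card) :=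
  (Equiv.ofBijective
      (fun a => (X.orderIsoOfFin rfl).symm ⟨σ (Y.orderIsoOfFin h.symm a), by
        have := Finset.mem_image_of_mem σ ((Y.orderIsoOfFin h.symm a)).2
        rwa [hσ] at this⟩)
      (Finite.injective_iff_bijective.mp (fun a b hab => by
        have h1 := (X.orderIsoOfFin rfl).symm.injective hab
        have h2 : σ (Y.orderIsoOfFin h.symm a) = σ (Y.orderIsoOfFin h.symm b) :=
          congrArg Subtype.val h1
        exact (Y.orderIsoOfFin h.symm).injective
          (Subtype.coe_injective (σ.injective h2)))),
   Equiv.ofBijective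
      (fun a => (Xᶜ.orderIsoOfFin rfl).symm
        ⟨σ (Yᶜ.orderIsoOfFin (show Yᶜ.card = Xᶜ.card by simp [Finset.card_compl, h]) a), by
          exact sigma_mem_Xc hσ ((Yᶜ.orderIsoOfFin _ a)).2⟩)
      (Finite.injective_iff_bijective.mp (fun a b hab => by
        have h1 := (Xᶜ.orderIsoOfFin rfl).symm.injective hab
        have h2 : σ ((Yᶜ.orderIsoOfFin (show Yᶜ.card = Xᶜ.card by
            simp [Finset.card_compl, h]) a))
            = σ (Yᶜ.orderIsoOfFin _ b) := congrArg Subtype.val h1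
        exact (Yᶜ.orderIsoOfFin _).injective
          (Subtype.coe_injective (σ.injective h2)))))

lemma Psi_spec1 (X Y : Finset (Fin N)) (h : X.card = Y.card) (σ : Equiv.Perm (Fin N))
    (hσ : Y.image σ = X) (a : Fin X.card) :
    (X.orderIsoOfFin rfl ((Psi X Y h σ hσ).1 a) : Fin N)
      = σ (Y.orderIsoOfFin h.symm a) := by
  simp [Psi]

lemma Psi_spec2 (X Y : Finset (Fin N)) (h : X.card = Y.card) (σ : Equiv.Perm (Fin N))
    (hσ : Y.image σ = X) (a : Fin Xᶜ.card) :
    (Xᶜ.orderIsoOfFin rfl ((Psi X Y h σ hσ).2 a) : Fin N)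
      = σ (Yᶜ.orderIsoOfFin (show Yᶜ.card = Xᶜ.card by simp [Finset.card_compl, h]) a) := by
  simp [Psi]

lemma coe_orderIso_cast {k l : ℕ} (S : Finset (Fin N)) (h1 : S.card = k) (h2 : S.card = l)
    (a : Fin k) (b : Fin l) (hab : (a : ℕ) = (b : ℕ)) :
    (S.orderIsoOfFin h1 a : Fin N) = (S.orderIsoOfFin h2 b : Fin N) := by
  rw [Finset.coe_orderIsoOfFin_apply, Finset.coe_orderIsoOfFin_apply]
  exact Finset.orderEmbOfFin_eq_orderEmbOfFin_iff.mpr hab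

lemma Phi_Psi (X Y : Finset (Fin N)) (h : X.card = Y.card) (σ : Equiv.Perm (Fin N))
    (hσ : Y.image σ = X) : Phi X Y (Psi X Y h σ hσ) = σ := by
  have hcc : Yᶜ.card = Xᶜ.card := by simp [Finset.card_compl, h]
  ext i
  by_cases hi : i ∈ Y
  · set a := (Y.orderIsoOfFin rfl).symm ⟨i, hi⟩ with ha
    have hia : i = (Y.orderIsoOfFin rfl a : Fin N) := by simp [ha]
    rw [hia, Phi_apply_Y X Y h, Psi_spec1]
    exact congrArg (fun t : Fin N => ((σ t : Fin N) : ℕ))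
      (coe_orderIso_cast Y h.symm rfl (Fin.cast h.symm a) a rfl)
  · rw [← Finset.mem_compl] at hi
    set a := (Yᶜ.orderIsoOfFin rfl).symm ⟨i, hi⟩ with ha
    have hia : i = (Yᶜ.orderIsoOfFin rfl a : Fin N) := by simp [ha]
    rw [hia, Phi_apply_Yc X Y h, Psi_spec2]
    exact congrArg (fun t : Fin N => ((σ t : Fin N) : ℕ))
      (coe_orderIso_cast Yᶜ hcc rfl (Fin.cast hcc a) a rfl)

lemma Psi_Phi (X Y : Finset (Fin N)) (h : X.card = Y.card)
    (pq : Equiv.Perm (Fin X.card) × Equiv.Perm (Fin Xᶜ.card))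
    (hσ : Y.image (Phi X Y pq) = X) :
    Psi X Y h (Phi X Y pq) hσ = pq := by
  have hcc : Yᶜ.card = Xᶜ.card := by simp [Finset.card_compl, h]
  refine Prod.ext ?_ ?_
  · ext a
    have h1 := Psi_spec1 X Y h (Phi X Y pq) hσ a
    have h2 : ((Y.orderIsoOfFin h.symm a : Fin N))
        = (Y.orderIsoOfFin rfl (Fin.cast h a) : Fin N) :=
      coe_orderIso_cast Y h.symm rfl _ _ (by simp)
    rw [h2, Phi_apply_Y X Y h] at h1
    have h3 := (X.orderIsoOfFin rfl).injective (Subtype.coe_injective h1)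
    have h4 : (Fin.cast h.symm (Fin.cast h a)) = a := by ext; simp
    rw [h4] at h3
    exact congrArg Fin.val h3
  · ext a
    have h1 := Psi_spec2 X Y h (Phi X Y pq) hσ a
    have h2 : ((Yᶜ.orderIsoOfFin hcc a : Fin N))
        = (Yᶜ.orderIsoOfFin rfl (Fin.cast hcc.symm a) : Fin N) :=
      coe_orderIso_cast Yᶜ hcc rfl _ _ (by simp)
    rw [h2, Phi_apply_Yc X Y h] at h1
    have h3 := (Xᶜ.orderIsoOfFin rfl).injective (Subtype.coe_injective h1)
    have h4 : (Fin.cast hcc (Fin.cast hcc.symm a)) = a := by ext; simp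
    rw [h4] at h3
    exact congrArg Fin.val h3

lemma prod_over_finset {M : Type*} [CommMonoid M] (S : Finset (Fin N)) (f : Fin N → M) :
    ∏ i ∈ S, f i = ∏ a : Fin S.card, f (S.orderIsoOfFin rfl a) := by
  rw [← Finset.prod_coe_sort S f]
  exact (Equiv.prod_comp (S.orderIsoOfFin rfl).toEquiv (fun y => f (y : Fin N))).symm

end Aux2

section Aux3
variable {N : ℕ}

lemma value_lemma (A B : Matrix (Fin N) (Fin N) ℂ) (X Y : Finset (Fin N))
    (h : X.card = Y.card)
    (pq : Equiv.Perm (Fin X.card) × Equiv.Perm (Fin Xᶜ.card)) :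
    (((Equiv.Perm.sign (Phi X Y pq) : ℤ)) : ℂ)
        * ((∏ i ∈ Y, B (Phi X Y pq i) i) * ∏ i ∈ Yᶜ, A (Phi X Y pq i) i)
      = (((Equiv.Perm.sign (shuffle X) * Equiv.Perm.sign (shuffle Y) : ℤˣ) : ℤ) : ℂ)
        * ((((Equiv.Perm.sign pq.2 : ℤˣ) : ℤ) : ℂ) * ∏ a : Fin Xᶜ.card,
            A (Xᶜ.orderIsoOfFin rfl (pq.2 a))
              (Yᶜ.orderIsoOfFin (show Yᶜ.card = Xᶜ.card by
                simp [Finset.card_compl, h]) a))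
        * ((((Equiv.Perm.sign pq.1 : ℤˣ) : ℤ) : ℂ) * ∏ a : Fin X.card,
            B (X.orderIsoOfFin rfl (pq.1 a)) (Y.orderIsoOfFin h.symm a)) := by
  have hcc : Yᶜ.card = Xᶜ.card := by simp [Finset.card_compl, h]
  have hsign : (((Equiv.Perm.sign (Phi X Y pq) : ℤ)) : ℂ)
      = (((Equiv.Perm.sign (shuffle X) * Equiv.Perm.sign (shuffle Y) : ℤˣ) : ℤ) : ℂ)
        * (((Equiv.Perm.sign pq.2 : ℤˣ) : ℤ) : ℂ)
        * (((Equiv.Perm.sign pq.1 : ℤˣ) : ℤ) : ℂ) := by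
    rw [Phi_sign]
    push_cast
    ring
  have hB : (∏ i ∈ Y, B (Phi X Y pq i) i)
      = ∏ a : Fin X.card, B (X.orderIsoOfFin rfl (pq.1 a)) (Y.orderIsoOfFin h.symm a) := by
    rw [prod_over_finset Y (fun i => B (Phi X Y pq i) i)]
    rw [← Equiv.prod_comp (finCongr h)
      (fun a : Fin Y.card => B (Phi X Y pq (Y.orderIsoOfFin rfl a)) (Y.orderIsoOfFin rfl a))]
    refine Fintype.prod_congr _ _ (fun b => ?_)
    rw [Phi_apply_Y X Y h]
    congr 1
  have hA : (∏ i ∈ Yᶜ, A (Phi X Y pq i) i)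
      = ∏ a : Fin Xᶜ.card, A (Xᶜ.orderIsoOfFin rfl (pq.2 a))
          (Yᶜ.orderIsoOfFin (show Yᶜ.card = Xᶜ.card by simp [Finset.card_compl, h]) a) := by
    rw [prod_over_finset Yᶜ (fun i => A (Phi X Y pq i) i)]
    rw [← Equiv.prod_comp (finCongr hcc.symm)
      (fun a : Fin Yᶜ.card => A (Phi X Y pq (Yᶜ.orderIsoOfFin rfl a)) (Yᶜ.orderIsoOfFin rfl a))]
    refine Fintype.prod_congr _ _ (fun b => ?_)
    rw [Phi_apply_Yc X Y h]
    congr 1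
  rw [hsign, hB, hA]
  ring

lemma fiber_sum (A B : Matrix (Fin N) (Fin N) ℂ) (X Y : Finset (Fin N)) :
    ∑ σ ∈ Finset.univ.filter (fun σ : Equiv.Perm (Fin N) => Y.image σ = X),
      (((Equiv.Perm.sign σ : ℤ)) : ℂ) * ((∏ i ∈ Y, B (σ i) i) * ∏ i ∈ Yᶜ, A (σ i) i)
      = minorTerm A B X Y := by
  by_cases h : X.card = Y.card
  · have hcc : Yᶜ.card = Xᶜ.card := by simp [Finset.card_compl, h]
    have key : ∑ σ ∈ Finset.univ.filter (fun σ : Equiv.Perm (Fin N) => Y.image σ = X),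
        (((Equiv.Perm.sign σ : ℤ)) : ℂ) * ((∏ i ∈ Y, B (σ i) i) * ∏ i ∈ Yᶜ, A (σ i) i)
        = ∑ pq : Equiv.Perm (Fin X.card) × Equiv.Perm (Fin Xᶜ.card),
          (((Equiv.Perm.sign (shuffle X) * Equiv.Perm.sign (shuffle Y) : ℤˣ) : ℤ) : ℂ)
            * ((((Equiv.Perm.sign pq.2 : ℤˣ) : ℤ) : ℂ) * ∏ a : Fin Xᶜ.card,
                A (Xᶜ.orderIsoOfFin rfl (pq.2 a))
                  (Yᶜ.orderIsoOfFin (show Yᶜ.card = Xᶜ.card by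
                    simp [Finset.card_compl, h]) a))
            * ((((Equiv.Perm.sign pq.1 : ℤˣ) : ℤ) : ℂ) * ∏ a : Fin X.card,
                B (X.orderIsoOfFin rfl (pq.1 a)) (Y.orderIsoOfFin h.symm a)) := by
      refine Finset.sum_bij' (fun σ hσ => Psi X Y h σ (by simpa using hσ))
        (fun pq _ => Phi X Y pq) (fun σ hσ => Finset.mem_univ _)
        (fun pq _ => by simp [Phi_image X Y h pq]) ?_ ?_ ?_
      · intro σ hσ
        exact Phi_Psi X Y h σ (by simpa using hσ)
      · intro pq _
        exact Psi_Phi X Y h pq _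
      · intro σ hσ
        conv_lhs => rw [← Phi_Psi X Y h σ (by simpa using hσ)]
        exact value_lemma A B X Y h _
    rw [key]
    simp only [minorTerm, dif_pos h, det_apply', submatrix_apply]
    rw [Fintype.sum_prod_type]
    simp only [← Finset.sum_mul, ← Finset.mul_sum]
  · rw [Finset.filter_false_of_mem, Finset.sum_empty]
    · simp only [minorTerm, dif_neg h]
    · intro σ _ hσ
      exact h (by rw [← hσ, Finset.card_image_of_injective _ σ.injective])

end Aux3

/-- for any two `N×N` complex matrices `A` and `B`,
`det(A+B)` equals the sum over pairs of subsets `X, Y ⊆ [N]` with `|X| = |Y|` of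
`sign(σ_X) sign(σ_Y) det(A[X̄,Ȳ]) det(B[X,Y])`. -/
theorem stmt15 {N : ℕ} (A B : Matrix (Fin N) (Fin N) ℂ) :
    (A + B).det = ∑ X : Finset (Fin N), ∑ Y : Finset (Fin N), minorTerm A B X Y := by
  rw [det_apply']
  have expand : ∀ σ : Equiv.Perm (Fin N),
      (((Equiv.Perm.sign σ : ℤ)) : ℂ) * ∏ i, (A + B) (σ i) i
      = ∑ Y : Finset (Fin N), (((Equiv.Perm.sign σ : ℤ)) : ℂ)
          * ((∏ i ∈ Y, B (σ i) i) * ∏ i ∈ Yᶜ, A (σ i) i) := by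
    intro σ
    rw [← Finset.mul_sum]
    congr 1
    calc ∏ i, (A + B) (σ i) i
        = ∏ i, (B (σ i) i + A (σ i) i) := by
          refine Fintype.prod_congr _ _ (fun i => ?_)
          simp [Matrix.add_apply, add_comm]
      _ = ∑ Y ∈ Finset.univ.powerset,
            (∏ i ∈ Y, B (σ i) i) * ∏ i ∈ Finset.univ \ Y, A (σ i) i :=
          Finset.prod_add _ _ _
      _ = ∑ Y : Finset (Fin N), (∏ i ∈ Y, B (σ i) i) * ∏ i ∈ Yᶜ, A (σ i) i := by
          rw [Finset.powerset_univ]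
          exact Finset.sum_congr rfl (fun Y _ => by rw [← Finset.compl_eq_univ_sdiff])
  calc ∑ σ : Equiv.Perm (Fin N), (((Equiv.Perm.sign σ : ℤ)) : ℂ) * ∏ i, (A + B) (σ i) i
      = ∑ σ : Equiv.Perm (Fin N), ∑ Y : Finset (Fin N),
          (((Equiv.Perm.sign σ : ℤ)) : ℂ)
            * ((∏ i ∈ Y, B (σ i) i) * ∏ i ∈ Yᶜ, A (σ i) i) :=
        Finset.sum_congr rfl (fun σ _ => expand σ)
    _ = ∑ Y : Finset (Fin N), ∑ σ : Equiv.Perm (Fin N),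
          (((Equiv.Perm.sign σ : ℤ)) : ℂ)
            * ((∏ i ∈ Y, B (σ i) i) * ∏ i ∈ Yᶜ, A (σ i) i) := Finset.sum_comm
    _ = ∑ Y : Finset (Fin N), ∑ X : Finset (Fin N), minorTerm A B X Y := by
        refine Finset.sum_congr rfl (fun Y _ => ?_)
        rw [← Finset.sum_fiberwise Finset.univ (fun σ : Equiv.Perm (Fin N) => Y.image σ)
          (fun σ => (((Equiv.Perm.sign σ : ℤ)) : ℂ)
            * ((∏ i ∈ Y, B (σ i) i) * ∏ i ∈ Yᶜ, A (σ i) i))]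
        exact Finset.sum_congr rfl (fun X _ => fiber_sum A B X Y)
    _ = ∑ X : Finset (Fin N), ∑ Y : Finset (Fin N), minorTerm A B X Y := Finset.sum_comm
end
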